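/- For any $\alpha>0$ there exists $n_0$ such that for all $n\ge n_0$ the following holds. Let $G_1,\dots,G_n$ be graphs on $[n]$, each with minimum degree at least $(1/2+\alpha)n$. Then there is a Hamilton cycle on $[n]$ in $\bigcup_i G_i$ and a bijection $\phi$ from its edges to $[n]$ such that each edge $e$ satisfies $e\in E(G_{\phi(e)})$. -/

import Mathlib

open scoped Classical

namespace TH
open Finset

variable {n : ℕ}

/-- modular helpers -/
lemma modwin {k r a b : ℕ} (ha : a < k) (hb : b < k)
    (h : (r + a) % k = (r + b) % k) : a = b := by
  have h1 : (r + a) % k = (r % k + a % k) % k := by rw [Nat.add_mod]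
  have := Nat.ModEq.add_left_cancel (Nat.ModEq.refl r) (a := r) (c := a) (d := b) h
  have h2 : a % k = b % k := this
  rwa [Nat.mod_eq_of_lt ha, Nat.mod_eq_of_lt hb] at h2

lemma mod_succ_eq (m k : ℕ) : (m % k + 1) % k = (m + 1) % k := by
  rw [Nat.mod_add_mod]

lemma mod_roundtrip {k r m : ℕ} (hr : r < k) (hm : m < k) :
    (r + (m + k - r) % k) % k = m := by
  have h1 : (r + (m + k - r) % k) % k = (r + (m + k - r)) % k := by
    conv_lhs => rw [Nat.add_comm r]
    rw [Nat.mod_add_mod, Nat.add_comm]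
  rw [h1]
  have h2 : r + (m + k - r) = m + k := by omega
  rw [h2, Nat.add_mod_right, Nat.mod_eq_of_lt hm]

variable (G : Fin n → SimpleGraph (Fin n))

/-- the neighbourhood of `v` in colour `c` -/
noncomputable def nbr (c v : Fin n) : Finset (Fin n) := Finset.univ.filter (fun u => (G c).Adj v u)

lemma mem_nbr {c v u : Fin n} : u ∈ nbr G c v ↔ (G c).Adj v u := by
  simp [nbr]

/-- absorber data -/
structure Abs (x : Fin n) where
  T' : ℕ
  a : ℕ → Fin n
  b : ℕ → Fin n
  d : ℕ → Fin n
  adj : ∀ t < T', (G (d t)).Adj (a t) (b t)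
  ax : ∀ t < T', (G (d t)).Adj x (a t)
  bx : ∀ t < T', (G (d t)).Adj x (b t)
  anx : ∀ t < T', a t ≠ x ∧ b t ≠ x
  vinj : ∀ t < T', ∀ s < T', (a t = a s → t = s) ∧ (b t = b s → t = s) ∧ a t ≠ b s
  cinj : ∀ t < T', ∀ s < T', d t = d s → t = s
  hit : ∀ f : Fin n, ∃ t < T', (G f).Adj x (a t)

/-- a rainbow path configuration on `k` vertices containing the first `s` absorbers -/
structure Conf (x : Fin n) (A : Abs G x) (s k : ℕ) where
  P : ℕ → Fin n
  C : ℕ → Fin n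
  injP : ∀ i < k, ∀ j < k, P i = P j → i = j
  injC : ∀ i, i + 1 < k → ∀ j, j + 1 < k → C i = C j → i = j
  adj : ∀ i, i + 1 < k → (G (C i)).Adj (P i) (P (i+1))
  nx : ∀ i < k, P i ≠ x
  habs : ∀ t < s, ∃ i, i + 1 < k ∧ C i = A.d t ∧
    ((P i = A.a t ∧ P (i+1) = A.b t) ∨ (P i = A.b t ∧ P (i+1) = A.a t))

/-- a rainbow cycle configuration -/
structure Cyc (x : Fin n) (A : Abs G x) (s k : ℕ) where
  Q : ℕ → Fin n
  D : ℕ → Fin n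
  injQ : ∀ i < k, ∀ j < k, Q i = Q j → i = j
  injD : ∀ i < k, ∀ j < k, D i = D j → i = j
  adj : ∀ i < k, (G (D i)).Adj (Q i) (Q ((i+1) % k))
  nx : ∀ i < k, Q i ≠ x
  habs : ∀ t < s, ∃ i < k, D i = A.d t ∧
    ((Q i = A.a t ∧ Q ((i+1) % k) = A.b t) ∨ (Q i = A.b t ∧ Q ((i+1) % k) = A.a t))

variable {G}

def Conf.free {x : Fin n} {A : Abs G x} {s k : ℕ} (X : Conf G x A s k) (c : Fin n) : Prop :=
  ∀ i, i + 1 < k → X.C i ≠ c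

def Cyc.free {x : Fin n} {A : Abs G x} {s k : ℕ} (Y : Cyc G x A s k) (c : Fin n) : Prop :=
  ∀ i < k, Y.D i ≠ c


section Surgery

variable {x : Fin n} {A : Abs G x} {s k : ℕ}

/-- reversal of a path -/
def Conf.rev (X : Conf G x A s k) : Conf G x A s k where
  P := fun i => X.P (k - 1 - i)
  C := fun i => X.C (k - 2 - i)
  injP := by
    intro i hi j hj h
    have := X.injP (k-1-i) (by omega) (k-1-j) (by omega) h
    omega
  injC := by
    intro i hi j hj h
    have := X.injC (k-2-i) (by omega) (k-2-j) (by omega) h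
    omega
  adj := by
    intro i hi
    have h1 : k - 1 - i = (k - 2 - i) + 1 := by omega
    have h2 : k - 1 - (i+1) = k - 2 - i := by omega
    rw [h1, h2]
    exact (X.adj (k-2-i) (by omega)).symm
  nx := by
    intro i hi
    exact X.nx (k-1-i) (by omega)
  habs := by
    intro t ht
    obtain ⟨i, hi, hc, hor⟩ := X.habs t ht
    refine ⟨k - 2 - i, by omega, ?_, ?_⟩
    · have : k - 2 - (k - 2 - i) = i := by omega
      rw [this, hc]
    · have h1 : k - 1 - (k - 2 - i) = i + 1 := by omega
      have h2 : k - 1 - (k - 2 - i + 1) = i := by omega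
      rw [h1, h2]
      tauto

lemma Conf.rev_free (X : Conf G x A s k) {c : Fin n} (h : X.free c) : X.rev.free c := by
  intro i hi
  exact h (k-2-i) (by omega)

lemma Conf.rev_P (X : Conf G x A s k) (i : ℕ) : X.rev.P i = X.P (k - 1 - i) := rfl

/-- appending a vertex at the end of a path -/
def Conf.app (X : Conf G x A s k) (u j : Fin n) (hk : 2 ≤ k)
    (hux : u ≠ x) (hufresh : ∀ i < k, X.P i ≠ u) (hj : X.free j)
    (hadj : (G j).Adj (X.P (k-1)) u) : Conf G x A s (k+1) where
  P := fun i => if i = k then u else X.P i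
  C := fun i => if i = k-1 then j else X.C i
  injP := by
    intro i hi j' hj' h
    by_cases h1 : i = k <;> by_cases h2 : j' = k <;> simp [h1, h2] at h
    · omega
    · exact absurd h.symm (hufresh j' (by omega))
    · exact absurd h (hufresh i (by omega))
    · exact X.injP i (by omega) j' (by omega) h
  injC := by
    intro i hi j' hj' h
    by_cases h1 : i = k-1 <;> by_cases h2 : j' = k-1 <;> simp [h1, h2] at h
    · omega
    · exact absurd h.symm (hj j' (by omega))
    · exact absurd h (hj i (by omega))
    · exact X.injC i (by omega) j' (by omega) h
  adj := by
    intro i hi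
    by_cases h1 : i = k-1
    · subst h1
      have h2 : k - 1 + 1 = k := by omega
      simp only [if_pos rfl, h2, if_pos rfl]
      have h3 : (k:ℕ) - 1 ≠ k := by omega
      rw [if_neg h3] at *
      exact hadj
    · have h2 : i ≠ k := by omega
      have h3 : i + 1 ≠ k := by omega
      simp only [if_neg h1, if_neg h2, if_neg h3]
      exact X.adj i (by omega)
  nx := by
    intro i hi
    by_cases h1 : i = k
    · simpa [h1] using hux
    · simpa [h1] using X.nx i (by omega)
  habs := by
    intro t ht
    obtain ⟨i, hi, hc, hor⟩ := X.habs t ht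
    refine ⟨i, by omega, ?_, ?_⟩
    · have : i ≠ k - 1 := by omega
      simpa [this]
    · have h1 : i ≠ k := by omega
      have h2 : i + 1 ≠ k := by omega
      simpa [h1, h2]

lemma Conf.app_free (X : Conf G x A s k) (u j : Fin n) (hk : 2 ≤ k)
    (hux : u ≠ x) (hufresh : ∀ i < k, X.P i ≠ u) (hj : X.free j)
    (hadj : (G j).Adj (X.P (k-1)) u) {c : Fin n} (h : X.free c) (hcj : c ≠ j) :
    (X.app u j hk hux hufresh hj hadj).free c := by
  intro i hi
  show (if i = k-1 then j else X.C i) ≠ c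
  by_cases h1 : i = k-1
  · simpa [h1] using fun hh => hcj hh.symm
  · simpa [h1] using h i (by omega)

lemma Conf.app_P_last (X : Conf G x A s k) (u j : Fin n) (hk : 2 ≤ k)
    (hux : u ≠ x) (hufresh : ∀ i < k, X.P i ≠ u) (hj : X.free j)
    (hadj : (G j).Adj (X.P (k-1)) u) :
    (X.app u j hk hux hufresh hj hadj).P ((k+1)-1) = u := by
  show (if k = k then u else X.P k) = u
  simp

lemma Conf.app_P (X : Conf G x A s k) (u j : Fin n) (hk : 2 ≤ k)
    (hux : u ≠ x) (hufresh : ∀ i < k, X.P i ≠ u) (hj : X.free j)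
    (hadj : (G j).Adj (X.P (k-1)) u) (i : ℕ) (hi : i < k) :
    (X.app u j hk hux hufresh hj hadj).P i = X.P i := by
  show (if i = k then u else X.P i) = X.P i
  simp [show i ≠ k by omega]


/-- closing a path into a cycle using a crossing at position `i₀` -/
def Conf.close (X : Conf G x A s k) (i₀ : ℕ) (j₁ j₂ : Fin n)
    (hi₀ : i₀ + 1 < k) (hf1 : X.free j₁) (hf2 : X.free j₂) (hne : j₁ ≠ j₂)
    (hA : (G j₁).Adj (X.P 0) (X.P (i₀+1)))
    (hB : (G j₂).Adj (X.P (k-1)) (X.P i₀))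
    (habs₀ : ∀ t < s, X.C i₀ ≠ A.d t) : Cyc G x A s k where
  Q := fun m => if m ≤ i₀ then X.P m else X.P (k + i₀ - m)
  D := fun m => if m < i₀ then X.C m else if m = i₀ then j₂
    else if m + 1 < k then X.C (k - 1 + i₀ - m) else j₁
  injQ := by
    intro m hm m' hm' h
    split_ifs at h with h1 h2 h2
    · have := X.injP m (by omega) m' (by omega) h; omega
    · have := X.injP m (by omega) (k + i₀ - m') (by omega) h; omega
    · have := X.injP (k + i₀ - m) (by omega) m' (by omega) h; omega
    · have := X.injP (k + i₀ - m) (by omega) (k + i₀ - m') (by omega) h; omega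
  injD := by
    intro m hm m' hm' h
    split_ifs at h with h1 h2 h3 h4 h5 h6 h7 h8 h9
    all_goals try omega
    all_goals try { have := X.injC _ (by omega) _ (by omega) h; omega }
    all_goals try { exact absurd h (hf1 _ (by omega)) }
    all_goals try { exact absurd h.symm (hf1 _ (by omega)) }
    all_goals try { exact absurd h (hf2 _ (by omega)) }
    all_goals try { exact absurd h.symm (hf2 _ (by omega)) }
    all_goals try { exact absurd h hne }
    all_goals try { exact absurd h.symm hne }
  adj := by
    intro m hm
    rcases Nat.lt_trichotomy m i₀ with hc | hc | hc
    · have e1 : (m+1) % k = m + 1 := Nat.mod_eq_of_lt (by omega)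
      rw [e1]
      simp only [show m ≤ i₀ by omega, if_pos, show m + 1 ≤ i₀ by omega,
        show m < i₀ by omega]
      exact X.adj m (by omega)
    · subst hc
      have e1 : (m+1) % k = m + 1 := Nat.mod_eq_of_lt (by omega)
      rw [e1]
      simp only [show ¬ (m < m) by omega, if_neg, if_pos, le_refl,
        show ¬ (m + 1 ≤ m) by omega, if_true, if_false, ite_true, ite_false]
      have e2 : k + m - (m+1) = k - 1 := by omega
      rw [e2]
      exact hB.symm
    · rcases Nat.lt_or_ge (m+1) k with hk1 | hk1
      · have e1 : (m+1) % k = m + 1 := Nat.mod_eq_of_lt (by omega)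
        rw [e1]
        simp only [show ¬ (m ≤ i₀) by omega, show ¬ (m < i₀) by omega,
          show ¬ (m = i₀) by omega, show ¬ (m + 1 ≤ i₀) by omega, if_pos hk1,
          if_neg, ite_false, ite_true, if_true, if_false]
        have e2 : k + i₀ - m = (k - 1 + i₀ - m) + 1 := by omega
        have e3 : k + i₀ - (m+1) = k - 1 + i₀ - m := by omega
        rw [e2, e3]
        exact (X.adj (k - 1 + i₀ - m) (by omega)).symm
      · have hmk : m = k - 1 := by omega
        have e1 : (m+1) % k = 0 := by
          rw [show m + 1 = k by omega]
          exact Nat.mod_self k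
        rw [e1]
        simp only [show ¬ (m ≤ i₀) by omega, show ¬ (m < i₀) by omega,
          show ¬ (m = i₀) by omega, show ¬ (m + 1 < k) by omega,
          show (0:ℕ) ≤ i₀ by omega, ite_false, ite_true, if_true, if_false,
          if_neg, if_pos]
        have e2 : k + i₀ - m = i₀ + 1 := by omega
        rw [e2]
        exact hA.symm
  nx := by
    intro m hm
    split_ifs with h1
    · exact X.nx m (by omega)
    · exact X.nx (k + i₀ - m) (by omega)
  habs := by
    intro t ht
    obtain ⟨i, hi, hc, hor⟩ := X.habs t ht
    have hne_i : i ≠ i₀ := fun hh => habs₀ t ht (hh ▸ hc)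
    rcases Nat.lt_or_ge i i₀ with hcase | hcase
    · refine ⟨i, by omega, ?_, ?_⟩
      · simp only [if_pos hcase]
        exact hc
      · have e1 : (i+1) % k = i + 1 := Nat.mod_eq_of_lt (by omega)
        rw [e1]
        simp only [show i ≤ i₀ by omega, show i + 1 ≤ i₀ by omega, if_pos]
        exact hor
    · have hgt : i₀ < i := by omega
      refine ⟨k - 1 + i₀ - i, by omega, ?_, ?_⟩
      · simp only [show ¬ (k - 1 + i₀ - i < i₀) by omega,
          show ¬ (k - 1 + i₀ - i = i₀) by omega,
          show k - 1 + i₀ - i + 1 < k by omega, ite_false, ite_true, if_true,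
          if_false, if_neg, if_pos]
        have e2 : k - 1 + i₀ - (k - 1 + i₀ - i) = i := by omega
        rw [e2]
        exact hc
      · have e1 : (k - 1 + i₀ - i + 1) % k = k - 1 + i₀ - i + 1 :=
          Nat.mod_eq_of_lt (by omega)
        rw [e1]
        simp only [show ¬ (k - 1 + i₀ - i ≤ i₀) by omega,
          show ¬ (k - 1 + i₀ - i + 1 ≤ i₀) by omega, if_neg]
        have e2 : k + i₀ - (k - 1 + i₀ - i) = i + 1 := by omega
        have e3 : k + i₀ - (k - 1 + i₀ - i + 1) = i := by omega
        rw [e2, e3]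
        tauto

lemma Conf.close_free (X : Conf G x A s k) (i₀ : ℕ) (j₁ j₂ : Fin n)
    (hi₀ : i₀ + 1 < k) (hf1 : X.free j₁) (hf2 : X.free j₂) (hne : j₁ ≠ j₂)
    (hA : (G j₁).Adj (X.P 0) (X.P (i₀+1)))
    (hB : (G j₂).Adj (X.P (k-1)) (X.P i₀))
    (habs₀ : ∀ t < s, X.C i₀ ≠ A.d t)
    {c : Fin n} (hcf : X.free c) (hc1 : c ≠ j₁) (hc2 : c ≠ j₂) :
    (X.close i₀ j₁ j₂ hi₀ hf1 hf2 hne hA hB habs₀).free c := by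
  intro m hm
  show (if m < i₀ then X.C m else if m = i₀ then j₂
    else if m + 1 < k then X.C (k - 1 + i₀ - m) else j₁) ≠ c
  split_ifs with h1 h2 h3
  · exact hcf m (by omega)
  · exact fun hh => hc2 hh.symm
  · exact hcf _ (by omega)
  · exact fun hh => hc1 hh.symm

lemma Conf.close_free_removed (X : Conf G x A s k) (i₀ : ℕ) (j₁ j₂ : Fin n)
    (hi₀ : i₀ + 1 < k) (hf1 : X.free j₁) (hf2 : X.free j₂) (hne : j₁ ≠ j₂)
    (hA : (G j₁).Adj (X.P 0) (X.P (i₀+1)))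
    (hB : (G j₂).Adj (X.P (k-1)) (X.P i₀))
    (habs₀ : ∀ t < s, X.C i₀ ≠ A.d t) :
    (X.close i₀ j₁ j₂ hi₀ hf1 hf2 hne hA hB habs₀).free (X.C i₀) := by
  intro m hm
  show (if m < i₀ then X.C m else if m = i₀ then j₂
    else if m + 1 < k then X.C (k - 1 + i₀ - m) else j₁) ≠ X.C i₀
  split_ifs with h1 h2 h3
  · intro hh; have := X.injC m (by omega) i₀ (by omega) hh; omega
  · exact fun hh => hf2 i₀ (by omega) hh.symm
  · intro hh; have := X.injC _ (by omega) i₀ (by omega) hh; omega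
  · exact fun hh => hf1 i₀ (by omega) hh.symm

lemma Conf.close_Q (X : Conf G x A s k) (i₀ : ℕ) (j₁ j₂ : Fin n)
    (hi₀ : i₀ + 1 < k) (hf1 : X.free j₁) (hf2 : X.free j₂) (hne : j₁ ≠ j₂)
    (hA : (G j₁).Adj (X.P 0) (X.P (i₀+1)))
    (hB : (G j₂).Adj (X.P (k-1)) (X.P i₀))
    (habs₀ : ∀ t < s, X.C i₀ ≠ A.d t) (m : ℕ) :
    (X.close i₀ j₁ j₂ hi₀ hf1 hf2 hne hA hB habs₀).Q m
      = if m ≤ i₀ then X.P m else X.P (k + i₀ - m) := rfl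


/-- reopening a cycle at position `r₀` and attaching a new vertex `w` -/
def Cyc.reopen (Y : Cyc G x A s k) (w : Fin n) (c' : Fin n) (r₀ : ℕ)
    (hr₀ : r₀ < k) (hk : 2 ≤ k) (hwx : w ≠ x) (hwf : ∀ i < k, Y.Q i ≠ w)
    (hc' : Y.free c') (hadj : (G c').Adj w (Y.Q r₀))
    (habs₀ : ∀ t < s, Y.D ((r₀ + k - 1) % k) ≠ A.d t) : Conf G x A s (k+1) where
  P := fun i => if i = 0 then w else Y.Q ((r₀ + (i-1)) % k)
  C := fun i => if i = 0 then c' else Y.D ((r₀ + (i-1)) % k)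
  injP := by
    intro i hi j hj h
    split_ifs at h with h1 h2 h2
    · omega
    · exact absurd h.symm (hwf _ (Nat.mod_lt _ (by omega)) )
    · exact absurd h (hwf _ (Nat.mod_lt _ (by omega)))
    · have := Y.injQ _ (Nat.mod_lt _ (by omega)) _ (Nat.mod_lt _ (by omega)) h
      have := modwin (k := k) (r := r₀) (a := i - 1) (b := j - 1)
        (by omega) (by omega) this
      omega
  injC := by
    intro i hi j hj h
    split_ifs at h with h1 h2 h2
    · omega
    · exact absurd h.symm (hc' _ (Nat.mod_lt _ (by omega)))
    · exact absurd h (hc' _ (Nat.mod_lt _ (by omega)))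
    · have := Y.injD _ (Nat.mod_lt _ (by omega)) _ (Nat.mod_lt _ (by omega)) h
      have := modwin (k := k) (r := r₀) (a := i - 1) (b := j - 1)
        (by omega) (by omega) this
      omega
  adj := by
    intro i hi
    by_cases h1 : i = 0
    · subst h1
      simp only [if_pos rfl, if_neg (by omega : ¬ (0+1 = 0))]
      have e1 : (0 + 1 - 1 : ℕ) = 0 := rfl
      rw [e1, Nat.add_zero, Nat.mod_eq_of_lt hr₀]
      exact hadj
    · simp only [if_neg h1, if_neg (by omega : ¬ (i+1 = 0))]
      have e1 : i + 1 - 1 = (i - 1) + 1 := by omega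
      rw [e1, ← Nat.add_assoc]
      have e2 : (r₀ + (i-1) + 1) % k = ((r₀ + (i-1)) % k + 1) % k :=
        (mod_succ_eq _ _).symm
      rw [e2]
      exact Y.adj _ (Nat.mod_lt _ (by omega))
  nx := by
    intro i hi
    split_ifs with h1
    · exact hwx
    · exact Y.nx _ (Nat.mod_lt _ (by omega))
  habs := by
    intro t ht
    obtain ⟨m, hm, hc, hor⟩ := Y.habs t ht
    have hmd : m ≠ (r₀ + k - 1) % k := fun hh => habs₀ t ht (hh ▸ hc)
    set i := (m + k - r₀) % k with hidef
    have hik : i < k := Nat.mod_lt _ (by omega)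
    have hrt : (r₀ + i) % k = m := mod_roundtrip hr₀ hm
    have hine : i ≠ k - 1 := by
      intro hh
      apply hmd
      rw [← hrt, hh]
      congr 1
      omega
    refine ⟨i + 1, by omega, ?_, ?_⟩
    · rw [if_neg (by omega : ¬ (i + 1 = 0))]
      have e1 : i + 1 - 1 = i := by omega
      rw [e1, hrt]
      exact hc
    · rw [if_neg (by omega : ¬ (i + 1 = 0)), if_neg (by omega : ¬ (i + 2 = 0))]
      have e1 : i + 1 - 1 = i := by omega
      have e2 : i + 2 - 1 = i + 1 := by omega
      rw [e1, e2, hrt, ← Nat.add_assoc]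
      have e3 : (r₀ + i + 1) % k = ((r₀ + i) % k + 1) % k := (mod_succ_eq _ _).symm
      rw [e3, hrt]
      exact hor

lemma Cyc.reopen_free (Y : Cyc G x A s k) (w : Fin n) (c' : Fin n) (r₀ : ℕ)
    (hr₀ : r₀ < k) (hk : 2 ≤ k) (hwx : w ≠ x) (hwf : ∀ i < k, Y.Q i ≠ w)
    (hc' : Y.free c') (hadj : (G c').Adj w (Y.Q r₀))
    (habs₀ : ∀ t < s, Y.D ((r₀ + k - 1) % k) ≠ A.d t)
    {c : Fin n} (hcf : Y.free c) (hcc : c ≠ c') :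
    (Y.reopen w c' r₀ hr₀ hk hwx hwf hc' hadj habs₀).free c := by
  intro i hi
  show (if i = 0 then c' else Y.D ((r₀ + (i-1)) % k)) ≠ c
  split_ifs with h1
  · exact fun hh => hcc hh.symm
  · exact hcf _ (Nat.mod_lt _ (by omega))


lemma Conf.app_C (X : Conf G x A s k) (u j : Fin n) (hk : 2 ≤ k)
    (hux : u ≠ x) (hufresh : ∀ i < k, X.P i ≠ u) (hj : X.free j)
    (hadj : (G j).Adj (X.P (k-1)) u) (i : ℕ) (hi : i + 1 < k) :
    (X.app u j hk hux hufresh hj hadj).C i = X.C i := by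
  show (if i = k - 1 then j else X.C i) = X.C i
  simp [show i ≠ k - 1 by omega]

lemma Conf.app_C_last (X : Conf G x A s k) (u j : Fin n) (hk : 2 ≤ k)
    (hux : u ≠ x) (hufresh : ∀ i < k, X.P i ≠ u) (hj : X.free j)
    (hadj : (G j).Adj (X.P (k-1)) u) :
    (X.app u j hk hux hufresh hj hadj).C (k-1) = j := by
  show (if k - 1 = k - 1 then j else X.C (k-1)) = j
  simp

/-- record one more absorber as being contained in the path -/
def Conf.bump (X : Conf G x A s k)
    (h : ∃ i, i + 1 < k ∧ X.C i = A.d s ∧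
      ((X.P i = A.a s ∧ X.P (i+1) = A.b s) ∨ (X.P i = A.b s ∧ X.P (i+1) = A.a s))) :
    Conf G x A (s+1) k where
  P := X.P
  C := X.C
  injP := X.injP
  injC := X.injC
  adj := X.adj
  nx := X.nx
  habs := by
    intro t ht
    rcases Nat.lt_or_ge t s with h' | h'
    · exact X.habs t h'
    · have : t = s := by omega
      subst this
      exact h

lemma Conf.bump_free (X : Conf G x A s k)
    (h : ∃ i, i + 1 < k ∧ X.C i = A.d s ∧
      ((X.P i = A.a s ∧ X.P (i+1) = A.b s) ∨ (X.P i = A.b s ∧ X.P (i+1) = A.a s)))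
    {c : Fin n} (hc : X.free c) : (X.bump h).free c := hc

end Surgery


section Counting

variable {x : Fin n} {A : Abs G x} {s k : ℕ}

lemma inter_card_lb (S T' : Finset (Fin n)) :
    (S.card : ℝ) + T'.card - n ≤ ((S ∩ T').card : ℝ) := by
  have h1 := Finset.card_union_add_card_inter S T'
  have h2 : (S ∪ T').card ≤ n := by
    simpa using Finset.card_le_univ (S ∪ T')
  have h1' : ((S ∪ T').card : ℝ) + ((S ∩ T').card : ℝ) = S.card + T'.card := by
    exact_mod_cast h1
  have h2' : ((S ∪ T').card : ℝ) ≤ n := by exact_mod_cast h2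
  linarith

/-- number of free colours of a path configuration -/
lemma Conf.free_card (X : Conf G x A s k) (hk : 1 ≤ k) :
    (n : ℝ) - (k - 1 : ℕ) ≤ ((Finset.univ.filter (fun c => X.free c)).card : ℝ) := by
  classical
  have hsub : (Finset.univ.filter (fun c => ¬ X.free c)).card ≤ k - 1 := by
    have : (Finset.univ.filter (fun c => ¬ X.free c)).card ≤ (Finset.range (k-1)).card := by
      apply Finset.card_le_card_of_injOn
        (fun c => if h : ∃ i, i + 1 < k ∧ X.C i = c then Classical.choose h else 0)
      · intro c hc
        simp only [Finset.coe_filter, Set.mem_setOf_eq, Finset.mem_coe, Finset.mem_filter, Finset.mem_univ, true_and] at hc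
        simp only [Finset.coe_filter, Set.mem_setOf_eq, Finset.mem_coe, Finset.mem_filter, Finset.mem_univ, true_and, Conf.free] at hc
        push_neg at hc
        obtain ⟨i, hi, hci⟩ := hc
        have h : ∃ i, i + 1 < k ∧ X.C i = c := ⟨i, hi, hci⟩
        simp only [dif_pos h, Finset.mem_range, Finset.mem_coe]
        have := (Classical.choose_spec h).1
        omega
      · intro c hc c' hc' hh
        simp only [Finset.coe_filter, Set.mem_setOf_eq, Finset.mem_coe, Finset.mem_filter, Finset.mem_univ, true_and] at hc hc'
        simp only [Finset.coe_filter, Set.mem_setOf_eq, Finset.mem_coe, Finset.mem_coe, Finset.mem_filter, Finset.mem_univ, true_and,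
          Conf.free] at hc hc'
        push_neg at hc hc'
        obtain ⟨i, hi, hci⟩ := hc
        obtain ⟨i', hi', hci'⟩ := hc'
        have h : ∃ i, i + 1 < k ∧ X.C i = c := ⟨i, hi, hci⟩
        have h' : ∃ i, i + 1 < k ∧ X.C i = c' := ⟨i', hi', hci'⟩
        simp only [dif_pos h, dif_pos h'] at hh
        have e1 := (Classical.choose_spec h).2
        have e2 := (Classical.choose_spec h').2
        rw [← e1, ← e2, hh]
    simpa using this
  have htot := Finset.card_filter_add_card_filter_not
    (s := (Finset.univ : Finset (Fin n))) (p := fun c => X.free c)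
  have hn : (Finset.univ : Finset (Fin n)).card = n := by simp
  have h1 : (Finset.univ.filter (fun c => X.free c)).card
      + (Finset.univ.filter (fun c => ¬ X.free c)).card = n := by
    omega
  have hk1 : ((k - 1 : ℕ) : ℝ) = (k : ℝ) - 1 := by
    have : (1:ℕ) ≤ k := hk
    push_cast [Nat.cast_sub this]
    ring
  have := hsub
  have h2 : ((Finset.univ.filter (fun c => ¬ X.free c)).card : ℝ) ≤ ((k-1 : ℕ) : ℝ) := by
    exact_mod_cast this
  have h3 : ((Finset.univ.filter (fun c => X.free c)).card : ℝ)
      + ((Finset.univ.filter (fun c => ¬ X.free c)).card : ℝ) = n := by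
    exact_mod_cast congrArg (Nat.cast : ℕ → ℝ) h1
  linarith

/-- number of free colours of a cycle configuration -/
lemma Cyc.free_card (Y : Cyc G x A s k) :
    (n : ℝ) - k ≤ ((Finset.univ.filter (fun c => Y.free c)).card : ℝ) := by
  classical
  have hsub : (Finset.univ.filter (fun c => ¬ Y.free c)).card ≤ k := by
    have : (Finset.univ.filter (fun c => ¬ Y.free c)).card ≤ (Finset.range k).card := by
      apply Finset.card_le_card_of_injOn
        (fun c => if h : ∃ i, i < k ∧ Y.D i = c then Classical.choose h else 0)
      · intro c hc
        simp only [Finset.coe_filter, Set.mem_setOf_eq, Finset.mem_coe, Finset.mem_filter, Finset.mem_univ, true_and] at hc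
        simp only [Finset.coe_filter, Set.mem_setOf_eq, Finset.mem_coe, Finset.mem_filter, Finset.mem_univ, true_and, Cyc.free] at hc
        push_neg at hc
        obtain ⟨i, hi, hci⟩ := hc
        have h : ∃ i, i < k ∧ Y.D i = c := ⟨i, hi, hci⟩
        simp only [dif_pos h, Finset.mem_range, Finset.mem_coe]
        exact (Classical.choose_spec h).1
      · intro c hc c' hc' hh
        simp only [Finset.coe_filter, Set.mem_setOf_eq, Finset.mem_coe, Finset.mem_filter, Finset.mem_univ, true_and] at hc hc'
        simp only [Finset.coe_filter, Set.mem_setOf_eq, Finset.mem_coe, Finset.mem_coe, Finset.mem_filter, Finset.mem_univ, true_and,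
          Cyc.free] at hc hc'
        push_neg at hc hc'
        obtain ⟨i, hi, hci⟩ := hc
        obtain ⟨i', hi', hci'⟩ := hc'
        have h : ∃ i, i < k ∧ Y.D i = c := ⟨i, hi, hci⟩
        have h' : ∃ i, i < k ∧ Y.D i = c' := ⟨i', hi', hci'⟩
        simp only [dif_pos h, dif_pos h'] at hh
        have e1 := (Classical.choose_spec h).2
        have e2 := (Classical.choose_spec h').2
        rw [← e1, ← e2, hh]
    simpa using this
  have htot := Finset.card_filter_add_card_filter_not
    (s := (Finset.univ : Finset (Fin n))) (p := fun c => Y.free c)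
  have hn : (Finset.univ : Finset (Fin n)).card = n := by simp
  have h1 : (Finset.univ.filter (fun c => Y.free c)).card
      + (Finset.univ.filter (fun c => ¬ Y.free c)).card = n := by
    omega
  have h2 : ((Finset.univ.filter (fun c => ¬ Y.free c)).card : ℝ) ≤ (k : ℝ) := by
    exact_mod_cast hsub
  have h3 : ((Finset.univ.filter (fun c => Y.free c)).card : ℝ)
      + ((Finset.univ.filter (fun c => ¬ Y.free c)).card : ℝ) = n := by
    exact_mod_cast congrArg (Nat.cast : ℕ → ℝ) h1
  linarith


/-- positions of absorber colours on a path -/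
lemma Conf.absPos_card (X : Conf G x A s k) :
    ((Finset.range (k-1)).filter (fun i => ∃ t < s, X.C i = A.d t)).card ≤ s := by
  classical
  have : ((Finset.range (k-1)).filter (fun i => ∃ t < s, X.C i = A.d t)).card
      ≤ (Finset.range s).card := by
    apply Finset.card_le_card_of_injOn
      (fun i => if h : ∃ t < s, X.C i = A.d t then Classical.choose h else 0)
    · intro i hi
      simp only [Finset.coe_filter, Set.mem_setOf_eq, Finset.mem_coe, Finset.mem_filter, Finset.mem_range] at hi
      obtain ⟨hik, h⟩ := hi
      simp only [dif_pos h, Finset.mem_range, Finset.mem_coe]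
      exact (Classical.choose_spec h).1
    · intro i hi i' hi' hh
      simp only [Finset.mem_coe, Finset.mem_filter, Finset.mem_range] at hi hi'
      obtain ⟨hik, h⟩ := hi
      obtain ⟨hik', h'⟩ := hi'
      simp only [dif_pos h, dif_pos h'] at hh
      obtain ⟨ht, hc⟩ := Classical.choose_spec h
      obtain ⟨ht', hc'⟩ := Classical.choose_spec h'
      rw [hh] at hc
      rw [← hc'] at hc
      exact X.injC i (by omega) i' (by omega) hc
  simpa using this

/-- positions of a cycle whose predecessor edge has an absorber colour -/
lemma Cyc.badR_card (Y : Cyc G x A s k) (hk : 1 ≤ k) :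
    ((Finset.range k).filter
      (fun r => ∃ t < s, Y.D ((r + k - 1) % k) = A.d t)).card ≤ s := by
  classical
  have : ((Finset.range k).filter
      (fun r => ∃ t < s, Y.D ((r + k - 1) % k) = A.d t)).card
      ≤ (Finset.range s).card := by
    apply Finset.card_le_card_of_injOn
      (fun r => if h : ∃ t < s, Y.D ((r + k - 1) % k) = A.d t then Classical.choose h else 0)
    · intro i hi
      simp only [Finset.coe_filter, Set.mem_setOf_eq, Finset.mem_coe, Finset.mem_filter, Finset.mem_range] at hi
      obtain ⟨hik, h⟩ := hi
      simp only [dif_pos h, Finset.mem_range, Finset.mem_coe]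
      exact (Classical.choose_spec h).1
    · intro i hi i' hi' hh
      simp only [Finset.mem_coe, Finset.mem_filter, Finset.mem_range] at hi hi'
      obtain ⟨hik, h⟩ := hi
      obtain ⟨hik', h'⟩ := hi'
      simp only [dif_pos h, dif_pos h'] at hh
      obtain ⟨ht, hc⟩ := Classical.choose_spec h
      obtain ⟨ht', hc'⟩ := Classical.choose_spec h'
      rw [hh] at hc
      rw [← hc'] at hc
      have := Y.injD _ (Nat.mod_lt _ (by omega)) _ (Nat.mod_lt _ (by omega)) hc
      have e1 : i + k - 1 = (k - 1) + i := by omega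
      have e2 : i' + k - 1 = (k - 1) + i' := by omega
      rw [e1, e2] at this
      exact modwin (by omega) (by omega) this
  simpa using this

/-- a saturated endpoint gives many crossing positions (front version) -/
lemma Conf.cardA (X : Conf G x A s k) (j₁ : Fin n) (hk : 1 ≤ k)
    (hsat : ∀ u ∈ nbr G j₁ (X.P 0), u = x ∨ ∃ s' < k, X.P s' = u) :
    ((nbr G j₁ (X.P 0)).card : ℝ) - 1 ≤
      (((Finset.range (k-1)).filter
        (fun i => (G j₁).Adj (X.P 0) (X.P (i+1)))).card : ℝ) := by
  classical
  set pos : Fin n → ℕ := fun u => if h : ∃ s' < k, X.P s' = u then Classical.choose h else 0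
    with hposdef
  have key : ((nbr G j₁ (X.P 0)).erase x).card ≤
      ((Finset.range (k-1)).filter (fun i => (G j₁).Adj (X.P 0) (X.P (i+1)))).card := by
    apply Finset.card_le_card_of_injOn (fun u => pos u - 1)
    · intro u hu
      have hux : u ≠ x := Finset.ne_of_mem_erase hu
      have hun : u ∈ nbr G j₁ (X.P 0) := Finset.mem_of_mem_erase hu
      have hadj : (G j₁).Adj (X.P 0) u := (mem_nbr G).1 hun
      have h : ∃ s' < k, X.P s' = u := by
        rcases hsat u hun with h | h
        · exact absurd h hux
        · exact h
      have hspec := Classical.choose_spec h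
      have hpos : pos u = Classical.choose h := by simp [hposdef, dif_pos h]
      have hne0 : pos u ≠ 0 := by
        intro hh
        rw [hh] at hpos
        have : X.P 0 = u := by rw [← hspec.2, ← hpos]
        exact (G j₁).ne_of_adj hadj this
      simp only [Finset.coe_filter, Set.mem_setOf_eq, Finset.mem_coe, Finset.mem_filter, Finset.mem_range]
      constructor
      · have := hspec.1; omega
      · have : pos u - 1 + 1 = pos u := by omega
        rw [this, hpos, hspec.2]
        exact hadj
    · intro u hu u' hu' hh
      have hun : u ∈ nbr G j₁ (X.P 0) := Finset.mem_of_mem_erase (Finset.mem_coe.1 hu)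
      have hun' : u' ∈ nbr G j₁ (X.P 0) := Finset.mem_of_mem_erase (Finset.mem_coe.1 hu')
      have hux : u ≠ x := Finset.ne_of_mem_erase (Finset.mem_coe.1 hu)
      have hux' : u' ≠ x := Finset.ne_of_mem_erase (Finset.mem_coe.1 hu')
      have h : ∃ s' < k, X.P s' = u := by
        rcases hsat u hun with h | h
        · exact absurd h hux
        · exact h
      have h' : ∃ s' < k, X.P s' = u' := by
        rcases hsat u' hun' with h2 | h2
        · exact absurd h2 hux'
        · exact h2
      have hspec := Classical.choose_spec h
      have hspec' := Classical.choose_spec h'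
      have hpos : pos u = Classical.choose h := by simp [hposdef, dif_pos h]
      have hpos' : pos u' = Classical.choose h' := by simp [hposdef, dif_pos h']
      have hne0 : pos u ≠ 0 := by
        intro hhh
        rw [hhh] at hpos
        have : X.P 0 = u := by rw [← hspec.2, ← hpos]
        exact (G j₁).ne_of_adj ((mem_nbr G).1 hun) this
      have hne0' : pos u' ≠ 0 := by
        intro hhh
        rw [hhh] at hpos'
        have : X.P 0 = u' := by rw [← hspec'.2, ← hpos']
        exact (G j₁).ne_of_adj ((mem_nbr G).1 hun') this
      dsimp only at hh
      have : pos u = pos u' := by omega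
      rw [hpos, hpos'] at this
      rw [← hspec.2, ← hspec'.2, this]
  have h1 : (nbr G j₁ (X.P 0)).card - 1 ≤ ((nbr G j₁ (X.P 0)).erase x).card :=
    Finset.pred_card_le_card_erase
  have h2 : ((nbr G j₁ (X.P 0)).card : ℝ) - 1 ≤
      (((nbr G j₁ (X.P 0)).erase x).card : ℝ) := by
    rcases Nat.eq_zero_or_pos (nbr G j₁ (X.P 0)).card with h0 | h0
    · have hnn : (0:ℝ) ≤ (((nbr G j₁ (X.P 0)).erase x).card : ℝ) := by positivity
      rw [h0]
      push_cast
      linarith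
    · have : ((nbr G j₁ (X.P 0)).card - 1 : ℕ) = ((nbr G j₁ (X.P 0)).card : ℝ) - 1 := by
        push_cast [Nat.cast_sub h0]
        ring
      rw [← this]
      exact_mod_cast h1
  have h3 : (((nbr G j₁ (X.P 0)).erase x).card : ℝ) ≤
      (((Finset.range (k-1)).filter
        (fun i => (G j₁).Adj (X.P 0) (X.P (i+1)))).card : ℝ) := by exact_mod_cast key
  linarith

/-- a saturated endpoint gives many crossing positions (back version) -/
lemma Conf.cardB (X : Conf G x A s k) (j₂ : Fin n) (hk : 1 ≤ k)
    (hsat : ∀ u ∈ nbr G j₂ (X.P (k-1)), u = x ∨ ∃ s' < k, X.P s' = u) :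
    ((nbr G j₂ (X.P (k-1))).card : ℝ) - 1 ≤
      (((Finset.range (k-1)).filter
        (fun i => (G j₂).Adj (X.P (k-1)) (X.P i))).card : ℝ) := by
  classical
  set pos : Fin n → ℕ := fun u => if h : ∃ s' < k, X.P s' = u then Classical.choose h else 0
    with hposdef
  have key : ((nbr G j₂ (X.P (k-1))).erase x).card ≤
      ((Finset.range (k-1)).filter (fun i => (G j₂).Adj (X.P (k-1)) (X.P i))).card := by
    apply Finset.card_le_card_of_injOn (fun u => pos u)
    · intro u hu
      have hux : u ≠ x := Finset.ne_of_mem_erase hu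
      have hun : u ∈ nbr G j₂ (X.P (k-1)) := Finset.mem_of_mem_erase hu
      have hadj : (G j₂).Adj (X.P (k-1)) u := (mem_nbr G).1 hun
      have h : ∃ s' < k, X.P s' = u := by
        rcases hsat u hun with h | h
        · exact absurd h hux
        · exact h
      have hspec := Classical.choose_spec h
      have hpos : pos u = Classical.choose h := by simp [hposdef, dif_pos h]
      have hnek : pos u ≠ k - 1 := by
        intro hh
        have : X.P (k-1) = u := by rw [← hspec.2, ← hpos, hh]
        exact (G j₂).ne_of_adj hadj this
      simp only [Finset.coe_filter, Set.mem_setOf_eq, Finset.mem_coe, Finset.mem_filter, Finset.mem_range]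
      constructor
      · have := hspec.1; omega
      · rw [hpos, hspec.2]
        exact hadj
    · intro u hu u' hu' hh
      have hun : u ∈ nbr G j₂ (X.P (k-1)) := Finset.mem_of_mem_erase (Finset.mem_coe.1 hu)
      have hun' : u' ∈ nbr G j₂ (X.P (k-1)) := Finset.mem_of_mem_erase (Finset.mem_coe.1 hu')
      have hux : u ≠ x := Finset.ne_of_mem_erase (Finset.mem_coe.1 hu)
      have hux' : u' ≠ x := Finset.ne_of_mem_erase (Finset.mem_coe.1 hu')
      have h : ∃ s' < k, X.P s' = u := by
        rcases hsat u hun with h | h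
        · exact absurd h hux
        · exact h
      have h' : ∃ s' < k, X.P s' = u' := by
        rcases hsat u' hun' with h2 | h2
        · exact absurd h2 hux'
        · exact h2
      have hspec := Classical.choose_spec h
      have hspec' := Classical.choose_spec h'
      have hpos : pos u = Classical.choose h := by simp [hposdef, dif_pos h]
      have hpos' : pos u' = Classical.choose h' := by simp [hposdef, dif_pos h']
      dsimp only at hh
      rw [hpos, hpos'] at hh
      rw [← hspec.2, ← hspec'.2, hh]
  have h1 : (nbr G j₂ (X.P (k-1))).card - 1 ≤ ((nbr G j₂ (X.P (k-1))).erase x).card :=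
    Finset.pred_card_le_card_erase
  have h2 : ((nbr G j₂ (X.P (k-1))).card : ℝ) - 1 ≤
      (((nbr G j₂ (X.P (k-1))).erase x).card : ℝ) := by
    rcases Nat.eq_zero_or_pos (nbr G j₂ (X.P (k-1))).card with h0 | h0
    · have hnn : (0:ℝ) ≤ (((nbr G j₂ (X.P (k-1))).erase x).card : ℝ) := by positivity
      rw [h0]
      push_cast
      linarith
    · have : ((nbr G j₂ (X.P (k-1))).card - 1 : ℕ)
          = ((nbr G j₂ (X.P (k-1))).card : ℝ) - 1 := by
        push_cast [Nat.cast_sub h0]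
        ring
      rw [← this]
      exact_mod_cast h1
  have h3 : (((nbr G j₂ (X.P (k-1))).erase x).card : ℝ) ≤
      (((Finset.range (k-1)).filter
        (fun i => (G j₂).Adj (X.P (k-1)) (X.P i))).card : ℝ) := by exact_mod_cast key
  linarith

/-- saturation bounds the path length from below -/
lemma Conf.sat_len (X : Conf G x A s k) (j : Fin n) (v : Fin n)
    (hsat : ∀ u ∈ nbr G j v, u = x ∨ ∃ s' < k, X.P s' = u) :
    ((nbr G j v).card : ℝ) ≤ k + 1 := by
  classical
  have hsub : nbr G j v ⊆ ((Finset.range k).image X.P) ∪ {x} := by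
    intro u hu
    rcases hsat u hu with h | ⟨s', hs', hps⟩
    · simp [h]
    · simp only [Finset.mem_union, Finset.mem_image, Finset.mem_range]
      exact Or.inl ⟨s', hs', hps⟩
  have h1 : (nbr G j v).card ≤ ((Finset.range k).image X.P).card + 1 := by
    calc (nbr G j v).card ≤ (((Finset.range k).image X.P) ∪ {x}).card :=
          Finset.card_le_card hsub
    _ ≤ ((Finset.range k).image X.P).card + ({x} : Finset (Fin n)).card :=
          Finset.card_union_le _ _
    _ = ((Finset.range k).image X.P).card + 1 := by simp
  have h2 : ((Finset.range k).image X.P).card ≤ k := by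
    calc ((Finset.range k).image X.P).card ≤ (Finset.range k).card :=
      Finset.card_image_le
    _ = k := Finset.card_range k
  have : (nbr G j v).card ≤ k + 1 := by omega
  exact_mod_cast this

/-- many positions on a cycle are neighbours of an outside vertex -/
lemma Cyc.nbr_positions (Y : Cyc G x A s k) (c' : Fin n) (w : Fin n) (hk : 1 ≤ k) :
    ((nbr G c' w).card : ℝ) - (n - k) ≤
      (((Finset.range k).filter (fun r => (G c').Adj w (Y.Q r))).card : ℝ) := by
  classical
  set S := (nbr G c' w).filter (fun u => ∃ r < k, Y.Q r = u) with hSdef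
  set pos : Fin n → ℕ := fun u => if h : ∃ r < k, Y.Q r = u then Classical.choose h else 0
    with hposdef
  have key : S.card ≤
      ((Finset.range k).filter (fun r => (G c').Adj w (Y.Q r))).card := by
    apply Finset.card_le_card_of_injOn pos
    · intro u hu
      simp only [Finset.coe_filter, Set.mem_setOf_eq, Finset.mem_coe, hSdef, Finset.mem_filter] at hu
      obtain ⟨hun, h⟩ := hu
      have hspec := Classical.choose_spec h
      have hpos : pos u = Classical.choose h := by simp [hposdef, dif_pos h]
      simp only [Finset.coe_filter, Set.mem_setOf_eq, Finset.mem_coe, Finset.mem_filter, Finset.mem_range]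
      refine ⟨by rw [hpos]; exact hspec.1, ?_⟩
      rw [hpos, hspec.2]
      exact (mem_nbr G).1 hun
    · intro u hu u' hu' hh
      simp only [Finset.coe_filter, Set.mem_setOf_eq, Finset.mem_coe, Finset.mem_coe, hSdef, Finset.mem_filter] at hu hu'
      obtain ⟨hun, h⟩ := hu
      obtain ⟨hun', h'⟩ := hu'
      have hspec := Classical.choose_spec h
      have hspec' := Classical.choose_spec h'
      have hpos : pos u = Classical.choose h := by simp [hposdef, dif_pos h]
      have hpos' : pos u' = Classical.choose h' := by simp [hposdef, dif_pos h']
      rw [hpos, hpos'] at hh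
      rw [← hspec.2, ← hspec'.2, hh]
  have himg : ((Finset.range k).image Y.Q).card = k := by
    rw [Finset.card_image_of_injOn, Finset.card_range]
    intro i hi j hj hh
    exact Y.injQ i (Finset.mem_range.1 hi) j (Finset.mem_range.1 hj) hh
  have hneg : ((nbr G c' w).filter (fun u => ¬ ∃ r < k, Y.Q r = u)).card + k ≤ n := by
    have hdisj : Disjoint ((nbr G c' w).filter (fun u => ¬ ∃ r < k, Y.Q r = u))
        ((Finset.range k).image Y.Q) := by
      rw [Finset.disjoint_left]
      intro u hu hu'
      simp only [Finset.mem_filter] at hu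
      simp only [Finset.mem_image, Finset.mem_range] at hu'
      exact hu.2 (by obtain ⟨r, hr, hqr⟩ := hu'; exact ⟨r, hr, hqr⟩)
    have := Finset.card_union_of_disjoint hdisj
    have hle : (((nbr G c' w).filter (fun u => ¬ ∃ r < k, Y.Q r = u))
        ∪ ((Finset.range k).image Y.Q)).card ≤ n := by
      calc (((nbr G c' w).filter (fun u => ¬ ∃ r < k, Y.Q r = u))
          ∪ ((Finset.range k).image Y.Q)).card ≤ (Finset.univ : Finset (Fin n)).card :=
            Finset.card_le_univ _
      _ = n := by simp
    omega
  have htot := Finset.card_filter_add_card_filter_not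
    (s := nbr G c' w) (p := fun u => ∃ r < k, Y.Q r = u)
  have h1 : S.card + ((nbr G c' w).filter (fun u => ¬ ∃ r < k, Y.Q r = u)).card
      = (nbr G c' w).card := htot
  have h2 : (nbr G c' w).card ≤ S.card + (n - k) := by omega
  have hkn : k ≤ n := by
    by_contra hkn
    push_neg at hkn
    omega
  have h2' : ((nbr G c' w).card : ℝ) ≤ S.card + ((n - k : ℕ) : ℝ) := by exact_mod_cast h2
  have h3 : ((n - k : ℕ) : ℝ) = (n : ℝ) - k := by
    push_cast [Nat.cast_sub hkn]
    ring
  have h4 : (S.card : ℝ) ≤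
      (((Finset.range k).filter (fun r => (G c').Adj w (Y.Q r))).card : ℝ) := by
    exact_mod_cast key
  linarith

end Counting


section Grow

variable {x : Fin n} {A : Abs G x} {s k : ℕ} {α : ℝ}

lemma real_nonempty {β : Type*} {S : Finset β} (h : (0:ℝ) < S.card) : S.Nonempty := by
  rw [← Finset.card_pos]
  exact_mod_cast h

lemma inter_card_lb' {β : Type*} [DecidableEq β] {Aset Bset big : Finset β}
    (hA : Aset ⊆ big) (hB : Bset ⊆ big) :
    (Aset.card : ℝ) + Bset.card - big.card ≤ ((Aset ∩ Bset).card : ℝ) := by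
  have h1 := Finset.card_union_add_card_inter Aset Bset
  have h2 : (Aset ∪ Bset).card ≤ big.card :=
    Finset.card_le_card (Finset.union_subset hA hB)
  have h1' : ((Aset ∪ Bset).card : ℝ) + ((Aset ∩ Bset).card : ℝ)
      = Aset.card + Bset.card := by exact_mod_cast h1
  have h2' : ((Aset ∪ Bset).card : ℝ) ≤ big.card := by exact_mod_cast h2
  linarith

lemma sdiff_card_lb {β : Type*} [DecidableEq β] (Aset Bset : Finset β) :
    (Aset.card : ℝ) - Bset.card ≤ ((Aset \ Bset).card : ℝ) := by
  have h1 : Aset.card ≤ (Aset \ Bset).card + Bset.card := by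
    have := Finset.sdiff_union_inter Aset Bset
    calc Aset.card = ((Aset \ Bset) ∪ (Aset ∩ Bset)).card := by rw [this]
    _ ≤ (Aset \ Bset).card + (Aset ∩ Bset).card := Finset.card_union_le _ _
    _ ≤ (Aset \ Bset).card + Bset.card := by
        have h9 : (Aset ∩ Bset).card ≤ Bset.card :=
          Finset.card_le_card Finset.inter_subset_right
        omega
  have h1' : (Aset.card : ℝ) ≤ ((Aset \ Bset).card : ℝ) + Bset.card := by
    exact_mod_cast h1
  linarith

/-- The main growing step: a rainbow path on `k` vertices avoiding `x` and containing all
absorbers can be extended to one on `k+1` vertices. -/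
lemma grow (hα : 0 < α) (hdeg : ∀ c v, (1/2 + α) * n ≤ ((nbr G c v).card : ℝ))
    (hsT : (s:ℝ) + 2 ≤ 2*α*n) (hk2 : 2 ≤ k) (hkn : k + 2 ≤ n)
    (X : Conf G x A s k) : Nonempty (Conf G x A s (k+1)) := by
  classical
  -- two distinct free colours
  have hfree2 : (1 : ℕ) < (Finset.univ.filter (fun c => X.free c)).card := by
    have h1 := X.free_card (by omega)
    have hn2 : (2:ℝ) ≤ (n:ℝ) - ((k-1 : ℕ) : ℝ) := by
      have : ((k-1:ℕ):ℝ) ≤ (n:ℝ) - 3 := by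
        have hh : (k - 1 : ℕ) + 3 ≤ n := by omega
        have := (Nat.cast_le (α := ℝ)).2 hh
        push_cast at this
        linarith
      linarith
    have : (2:ℝ) ≤ ((Finset.univ.filter (fun c => X.free c)).card : ℝ) := by linarith
    exact_mod_cast (by linarith : (1:ℝ) < ((Finset.univ.filter (fun c => X.free c)).card : ℝ))
  rw [Finset.one_lt_card] at hfree2
  obtain ⟨j₁, hj₁, j₂, hj₂, hj12⟩ := hfree2
  simp only [Finset.mem_filter, Finset.mem_univ, true_and] at hj₁ hj₂
  -- case split on saturation
  by_cases hsat : ∀ c, X.free c →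
      (∀ u ∈ nbr G c (X.P 0), u = x ∨ ∃ s' < k, X.P s' = u) ∧
      (∀ u ∈ nbr G c (X.P (k-1)), u = x ∨ ∃ s' < k, X.P s' = u)
  · -- saturated: close up and reopen
    set Aset := (Finset.range (k-1)).filter (fun i => (G j₁).Adj (X.P 0) (X.P (i+1)))
      with hAdef
    set Bset := (Finset.range (k-1)).filter (fun i => (G j₂).Adj (X.P (k-1)) (X.P i))
      with hBdef
    set Abspos := (Finset.range (k-1)).filter (fun i => ∃ t < s, X.C i = A.d t)
      with hAbsdef
    have hcA : ((nbr G j₁ (X.P 0)).card : ℝ) - 1 ≤ (Aset.card : ℝ) :=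
      X.cardA j₁ (by omega) (hsat j₁ hj₁).1
    have hcB : ((nbr G j₂ (X.P (k-1))).card : ℝ) - 1 ≤ (Bset.card : ℝ) :=
      X.cardB j₂ (by omega) (hsat j₂ hj₂).2
    have hinter : (Aset.card : ℝ) + Bset.card - (k-1:ℕ) ≤ ((Aset ∩ Bset).card : ℝ) := by
      have := inter_card_lb' (Aset := Aset) (Bset := Bset) (big := Finset.range (k-1))
        (by rw [hAdef]; exact Finset.filter_subset _ _)
        (by rw [hBdef]; exact Finset.filter_subset _ _)
      simpa using this
    have habscard : ((Abspos.card : ℝ)) ≤ s := by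
      exact_mod_cast X.absPos_card
    have hd1 := hdeg j₁ (X.P 0)
    have hd2 := hdeg j₂ (X.P (k-1))
    have hklen : (1/2 + α) * n ≤ (k:ℝ) + 1 := by
      have := X.sat_len j₁ (X.P 0) (hsat j₁ hj₁).1
      linarith
    have hkr : ((k-1:ℕ):ℝ) ≤ (n:ℝ) - 3 := by
      have hh : (k - 1 : ℕ) + 3 ≤ n := by omega
      have := (Nat.cast_le (α := ℝ)).2 hh
      push_cast at this
      linarith
    have hpos : (0:ℝ) < (((Aset ∩ Bset) \ Abspos).card : ℝ) := by
      have := sdiff_card_lb (Aset ∩ Bset) Abspos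
      have hnα : 0 < (n:ℝ) := by
        have : (0:ℕ) < n := by omega
        exact_mod_cast this
      nlinarith
    obtain ⟨i₀, hi₀⟩ := real_nonempty hpos
    simp only [Finset.mem_sdiff, Finset.mem_inter, hAdef, hBdef, hAbsdef,
      Finset.mem_filter, Finset.mem_range] at hi₀
    obtain ⟨⟨⟨hi₀k, hadjA⟩, ⟨_, hadjB⟩⟩, hnabs⟩ := hi₀
    have habs₀ : ∀ t < s, X.C i₀ ≠ A.d t := by
      intro t ht hh
      exact hnabs ⟨by omega, t, ht, hh⟩
    -- close the path into a cycle
    set Y := X.close i₀ j₁ j₂ (by omega) hj₁ hj₂ hj12 hadjA hadjB habs₀ with hYdef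
    -- choose an outside vertex
    have houtside : (0:ℝ) < ((Finset.univ \ (((Finset.range k).image Y.Q) ∪ {x})).card : ℝ) := by
      have h1 : (((Finset.range k).image Y.Q) ∪ {x}).card ≤ k + 1 := by
        calc (((Finset.range k).image Y.Q) ∪ {x}).card
            ≤ ((Finset.range k).image Y.Q).card + ({x} : Finset (Fin n)).card :=
              Finset.card_union_le _ _
        _ ≤ k + 1 := by
            have h2 : ((Finset.range k).image Y.Q).card ≤ k := by
              calc ((Finset.range k).image Y.Q).card ≤ (Finset.range k).card :=
                Finset.card_image_le
              _ = k := Finset.card_range k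
            simp
            omega
      have h2 := sdiff_card_lb (Finset.univ : Finset (Fin n)) (((Finset.range k).image Y.Q) ∪ {x})
      have h3 : ((Finset.univ : Finset (Fin n)).card : ℝ) = n := by simp
      have h4 : ((((Finset.range k).image Y.Q) ∪ {x}).card : ℝ) ≤ (k:ℝ) + 1 := by
        exact_mod_cast h1
      have h5 : (k:ℝ) + 2 ≤ n := by exact_mod_cast hkn
      linarith
    obtain ⟨w, hw⟩ := real_nonempty houtside
    simp only [Finset.mem_sdiff, Finset.mem_univ, true_and, Finset.mem_union,
      Finset.mem_image, Finset.mem_range, Finset.mem_singleton] at hw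
    push_neg at hw
    obtain ⟨hwim, hwx⟩ := hw
    have hwf : ∀ i < k, Y.Q i ≠ w := fun i hi hh => hwim i hi hh
    -- the removed colour is free for the cycle
    have hc'free : Y.free (X.C i₀) :=
      X.close_free_removed i₀ j₁ j₂ (by omega) hj₁ hj₂ hj12 hadjA hadjB habs₀
    -- find a good reattachment position
    set Rset := (Finset.range k).filter (fun r => (G (X.C i₀)).Adj w (Y.Q r)) with hRdef
    set Rbad := (Finset.range k).filter
      (fun r => ∃ t < s, Y.D ((r + k - 1) % k) = A.d t) with hRbaddef
    have hR1 : ((nbr G (X.C i₀) w).card : ℝ) - ((n:ℝ) - k) ≤ (Rset.card : ℝ) := by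
      have := Y.nbr_positions (X.C i₀) w (by omega)
      simpa using this
    have hRbad : ((Rbad.card : ℝ)) ≤ s := by
      exact_mod_cast Y.badR_card (by omega)
    have hd3 := hdeg (X.C i₀) w
    have hposR : (0:ℝ) < ((Rset \ Rbad).card : ℝ) := by
      have := sdiff_card_lb Rset Rbad
      linarith
    obtain ⟨r₀, hr₀⟩ := real_nonempty hposR
    simp only [Finset.mem_sdiff, hRdef, hRbaddef, Finset.mem_filter, Finset.mem_range] at hr₀
    obtain ⟨⟨hr₀k, hadjw⟩, hr₀bad⟩ := hr₀
    have habs₁ : ∀ t < s, Y.D ((r₀ + k - 1) % k) ≠ A.d t := by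
      intro t ht hh
      exact hr₀bad ⟨hr₀k, t, ht, hh⟩
    exact ⟨Y.reopen w (X.C i₀) r₀ hr₀k (by omega) hwx hwf hc'free hadjw habs₁⟩
  · -- not saturated: extend directly
    push_neg at hsat
    obtain ⟨c, hcfree, hviol⟩ := hsat
    rcases Classical.em (∀ u ∈ nbr G c (X.P 0), u = x ∨ ∃ s' < k, X.P s' = u) with hfront | hfront
    · -- back end violated
      obtain ⟨u, hun, hux, hufresh⟩ := hviol hfront
      refine ⟨X.app u c hk2 hux (fun i hi hh => hufresh i hi hh) hcfree ?_⟩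
      exact (mem_nbr G).1 hun
    · -- front end violated: reverse then extend
      push_neg at hfront
      obtain ⟨u, hun, hux, hufresh⟩ := hfront
      have hrevfree : X.rev.free c := X.rev_free hcfree
      have hrevfresh : ∀ i < k, X.rev.P i ≠ u := by
        intro i hi hh
        rw [X.rev_P] at hh
        exact hufresh (k-1-i) (by omega) hh
      have hrevadj : (G c).Adj (X.rev.P (k-1)) u := by
        rw [X.rev_P]
        have e1 : k - 1 - (k-1) = 0 := by omega
        rw [e1]
        exact (mem_nbr G).1 hun
      exact ⟨X.rev.app u c hk2 hux hrevfresh hrevfree hrevadj⟩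

end Grow


section PhaseA

variable {α : ℝ}

/-- greedy construction of the absorbers -/
lemma phaseA_ind (hα : 0 < α) (hα1 : α < 1)
    (hdeg : ∀ c v, (1/2 + α) * n ≤ ((nbr G c v).card : ℝ)) (x : Fin n) :
    ∀ (m : ℕ) (F U D : Finset (Fin n)), x ∈ U →
      ((1-α)^m * F.card < 1) → ((U.card : ℝ) + 2*m ≤ α*n) → ((D.card : ℝ) + m ≤ α*n) →
      ∃ (T' : ℕ) (a b d : ℕ → Fin n),
        T' ≤ m ∧
        (∀ t < T', (G (d t)).Adj (a t) (b t) ∧ (G (d t)).Adj x (a t) ∧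
          (G (d t)).Adj x (b t) ∧ a t ∉ U ∧ b t ∉ U ∧ d t ∉ D) ∧
        (∀ t < T', ∀ s' < T', (a t = a s' → t = s') ∧ (b t = b s' → t = s') ∧ a t ≠ b s') ∧
        (∀ t < T', ∀ s' < T', d t = d s' → t = s') ∧
        (∀ f ∈ F, ∃ t < T', (G f).Adj x (a t)) := by
  classical
  intro m
  induction m with
  | zero =>
    intro F U D hxU hF hU hD
    refine ⟨0, fun _ => x, fun _ => x, fun _ => x, le_refl 0, by omega, by omega, by omega, ?_⟩
    intro f hf
    exfalso
    simp only [pow_zero, one_mul] at hF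
    have : F.card = 0 := by exact_mod_cast Nat.lt_one_iff.1 (by exact_mod_cast hF)
    rw [Finset.card_eq_zero] at this
    subst this
    exact absurd hf (Finset.notMem_empty f)
  | succ m ih =>
    intro F U D hxU hF hU hD
    rcases Finset.eq_empty_or_nonempty F with hFe | hFne
    · subst hFe
      exact ⟨0, fun _ => x, fun _ => x, fun _ => x, by omega, by omega, by omega, by omega,
        fun f hf => absurd hf (Finset.notMem_empty f)⟩
    have hn0 : 0 < n := by
      rcases Finset.univ_nonempty_iff.2 ⟨x⟩ with _
      simpa using Fin.pos x
    have hnR : (0:ℝ) < n := by exact_mod_cast hn0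
    have hm0 : (0:ℝ) ≤ (m:ℝ) := Nat.cast_nonneg m
    push_cast at hU hD
    -- pick a fresh colour d
    have hDlt : D.card < n := by
      have h1 : (D.card : ℝ) < n := by nlinarith
      exact_mod_cast h1
    have hdex : (Finset.univ \ D).Nonempty := by
      apply real_nonempty
      have h1 := sdiff_card_lb (Finset.univ : Finset (Fin n)) D
      have h2 : ((Finset.univ : Finset (Fin n)).card : ℝ) = n := by simp
      have h3 : (D.card : ℝ) < n := by exact_mod_cast hDlt
      linarith
    obtain ⟨d, hd⟩ := hdex
    have hdD : d ∉ D := (Finset.mem_sdiff.1 hd).2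
    -- the candidate set for a
    set W := (nbr G d x) \ U with hWdef
    have hWbound : ∀ f ∈ F, α * n ≤ (((nbr G f x) ∩ W).card : ℝ) := by
      intro f hf
      have h1 := inter_card_lb (nbr G f x) W
      have h2 : ((nbr G d x).card : ℝ) - U.card ≤ (W.card : ℝ) := sdiff_card_lb _ _
      have h3 := hdeg f x
      have h4 := hdeg d x
      nlinarith
    -- double counting
    have hswap : (∑ f ∈ F, ((nbr G f x) ∩ W).card) =
        ∑ w ∈ W, (F.filter (fun f => w ∈ nbr G f x)).card := by
      have h1 : ∀ f, ((nbr G f x) ∩ W).card = ∑ w ∈ W, if w ∈ nbr G f x then 1 else 0 := by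
        intro f
        rw [Finset.inter_comm, ← Finset.filter_mem_eq_inter]
        exact Finset.card_filter _ _
      have h2 : ∀ w, (F.filter (fun f => w ∈ nbr G f x)).card
          = ∑ f ∈ F, if w ∈ nbr G f x then 1 else 0 := by
        intro w
        exact Finset.card_filter _ _
      simp only [h1, h2]
      exact Finset.sum_comm
    -- pigeonhole: find a good vertex a
    have hex_a : ∃ a ∈ W, α * F.card ≤ ((F.filter (fun f => a ∈ nbr G f x)).card : ℝ) := by
      by_contra hcon
      push_neg at hcon
      have hFpos : (0:ℝ) < F.card := by
        exact_mod_cast Finset.card_pos.2 hFne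
      have hsum_lb : (F.card : ℝ) * (α * n) ≤ ∑ f ∈ F, (((nbr G f x) ∩ W).card : ℝ) := by
        calc (F.card : ℝ) * (α * n) = ∑ _f ∈ F, α * n := by
              rw [Finset.sum_const, nsmul_eq_mul]
        _ ≤ ∑ f ∈ F, (((nbr G f x) ∩ W).card : ℝ) :=
              Finset.sum_le_sum (fun f hf => hWbound f hf)
      have hWne : W.Nonempty := by
        rcases Finset.eq_empty_or_nonempty W with hWe | hWne
        · exfalso
          rw [hWe] at hsum_lb
          simp only [Finset.inter_empty, Finset.card_empty, Nat.cast_zero,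
            Finset.sum_const_zero] at hsum_lb
          nlinarith [mul_pos hFpos (mul_pos hα hnR)]
        · exact hWne
      have hsum_ub : ∑ w ∈ W, ((F.filter (fun f => w ∈ nbr G f x)).card : ℝ)
          < ∑ _w ∈ W, α * F.card :=
        Finset.sum_lt_sum_of_nonempty hWne (fun w hw => hcon w hw)
      have heq : ∑ f ∈ F, (((nbr G f x) ∩ W).card : ℝ)
          = ∑ w ∈ W, ((F.filter (fun f => w ∈ nbr G f x)).card : ℝ) := by
        exact_mod_cast congrArg (Nat.cast : ℕ → ℝ) hswap
      have hWn : (W.card : ℝ) ≤ n := by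
        have : W.card ≤ n := by
          calc W.card ≤ (Finset.univ : Finset (Fin n)).card := Finset.card_le_univ _
          _ = n := by simp
        exact_mod_cast this
      have h5 : ∑ _w ∈ W, α * F.card = W.card * (α * F.card) := by
        rw [Finset.sum_const, nsmul_eq_mul]
      have h6 : (W.card : ℝ) * (α * F.card) ≤ (n:ℝ) * (α * F.card) :=
        mul_le_mul_of_nonneg_right hWn (mul_nonneg (le_of_lt hα) (Nat.cast_nonneg _))
      nlinarith [hsum_lb, hsum_ub, heq]
    obtain ⟨a, haW, hahits⟩ := hex_a
    have haU : a ∉ U := (Finset.mem_sdiff.1 (by rw [hWdef] at haW; exact haW)).2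
    have haadj : (G d).Adj x a :=
      (mem_nbr G).1 (Finset.mem_sdiff.1 (by rw [hWdef] at haW; exact haW)).1
    -- pick the partner b
    have hbex : (((nbr G d a) ∩ (nbr G d x)) \ (U ∪ {a})).Nonempty := by
      apply real_nonempty
      have h1 := sdiff_card_lb ((nbr G d a) ∩ (nbr G d x)) (U ∪ {a})
      have h2 := inter_card_lb (nbr G d a) (nbr G d x)
      have h3 := hdeg d a
      have h4 := hdeg d x
      have h5 : ((U ∪ {a}).card : ℝ) ≤ U.card + 1 := by
        have := Finset.card_union_le U ({a} : Finset (Fin n))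
        have h6 : ({a} : Finset (Fin n)).card = 1 := Finset.card_singleton a
        exact_mod_cast by omega
      nlinarith
    obtain ⟨b, hb⟩ := hbex
    have hbadj : (G d).Adj a b := (mem_nbr G).1 (Finset.mem_inter.1 (Finset.mem_sdiff.1 hb).1).1
    have hbx : (G d).Adj x b := (mem_nbr G).1 (Finset.mem_inter.1 (Finset.mem_sdiff.1 hb).1).2
    have hbU : b ∉ U ∪ {a} := (Finset.mem_sdiff.1 hb).2
    have hbU' : b ∉ U := fun hh => hbU (Finset.mem_union_left _ hh)
    have hba : b ≠ a := fun hh => hbU (Finset.mem_union_right _ (by simp [hh]))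
    -- recurse
    set F' := F.filter (fun f => ¬ (G f).Adj x a) with hF'def
    have hF'card : ((F'.card : ℝ)) ≤ (1-α) * F.card := by
      have h1 : F'.card + (F.filter (fun f => (G f).Adj x a)).card = F.card := by
        rw [hF'def]
        have := Finset.card_filter_add_card_filter_not
          (s := F) (p := fun f => (G f).Adj x a)
        omega
      have h2 : α * F.card ≤ ((F.filter (fun f => (G f).Adj x a)).card : ℝ) := by
        have : (F.filter (fun f => a ∈ nbr G f x)) = (F.filter (fun f => (G f).Adj x a)) := by
          apply Finset.filter_congr
          intro f _
          simp [mem_nbr]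
        rw [this] at hahits
        exact hahits
      have h3 : (F'.card : ℝ) + ((F.filter (fun f => (G f).Adj x a)).card : ℝ) = F.card := by
        exact_mod_cast h1
      linarith
    have hrec := ih F' (U ∪ {a, b}) (D ∪ {d})
      (Finset.mem_union_left _ hxU)
      (by
        have h1 : (0:ℝ) ≤ (1-α)^m := pow_nonneg (by linarith) m
        have h2 : (1-α)^m * F'.card ≤ (1-α)^m * ((1-α) * F.card) := by
          apply mul_le_mul_of_nonneg_left hF'card h1
        have h3 : (1-α)^m * ((1-α) * F.card) = (1-α)^(m+1) * F.card := by ring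
        linarith)
      (by
        have h1 : ((U ∪ {a, b}).card : ℝ) ≤ U.card + 2 := by
          have := Finset.card_union_le U ({a, b} : Finset (Fin n))
          have h2 : ({a, b} : Finset (Fin n)).card ≤ 2 := by
            simpa using Finset.card_insert_le a ({b} : Finset (Fin n))
          exact_mod_cast by omega
        push_cast
        push_cast at hU
        linarith)
      (by
        have h1 : ((D ∪ {d}).card : ℝ) ≤ D.card + 1 := by
          have := Finset.card_union_le D ({d} : Finset (Fin n))
          have h2 : ({d} : Finset (Fin n)).card = 1 := Finset.card_singleton d
          exact_mod_cast by omega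
        push_cast
        push_cast at hD
        linarith)
    obtain ⟨T', a', b', d', hT', hprops, hinj, hdinj, hhit⟩ := hrec
    refine ⟨T' + 1,
      (fun t => match t with | 0 => a | (t'+1) => a' t'),
      (fun t => match t with | 0 => b | (t'+1) => b' t'),
      (fun t => match t with | 0 => d | (t'+1) => d' t'), by omega, ?_, ?_, ?_, ?_⟩
    · intro t ht
      cases t with
      | zero => exact ⟨hbadj, haadj, hbx, haU, hbU', hdD⟩
      | succ t' =>
        have h1 := hprops t' (by omega)
        exact ⟨h1.1, h1.2.1, h1.2.2.1,
          fun hh => h1.2.2.2.1 (Finset.mem_union_left _ hh),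
          fun hh => h1.2.2.2.2.1 (Finset.mem_union_left _ hh),
          fun hh => h1.2.2.2.2.2 (Finset.mem_union_left _ hh)⟩
    · intro t ht s' hs'
      have hamem : a ∈ U ∪ {a, b} := Finset.mem_union_right _ (by simp)
      have hbmem : b ∈ U ∪ {a, b} := Finset.mem_union_right _ (by simp)
      cases t with
      | zero =>
        cases s' with
        | zero => exact ⟨fun _ => rfl, fun _ => rfl, fun hh => hba hh.symm⟩
        | succ s'' =>
          have h1 := hprops s'' (by omega)
          refine ⟨fun hh => ?_, fun hh => ?_, fun hh => ?_⟩
          · dsimp only at hh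
            exact absurd (show a' s'' ∈ U ∪ {a, b} from hh ▸ hamem) h1.2.2.2.1
          · dsimp only at hh
            exact absurd (show b' s'' ∈ U ∪ {a, b} from hh ▸ hbmem) h1.2.2.2.2.1
          · dsimp only at hh
            exact absurd (show b' s'' ∈ U ∪ {a, b} from hh ▸ hamem) h1.2.2.2.2.1
      | succ t'' =>
        cases s' with
        | zero =>
          have h1 := hprops t'' (by omega)
          refine ⟨fun hh => ?_, fun hh => ?_, fun hh => ?_⟩
          · dsimp only at hh
            exact absurd (show a' t'' ∈ U ∪ {a, b} from hh.symm ▸ hamem) h1.2.2.2.1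
          · dsimp only at hh
            exact absurd (show b' t'' ∈ U ∪ {a, b} from hh.symm ▸ hbmem) h1.2.2.2.2.1
          · dsimp only at hh
            exact absurd (show a' t'' ∈ U ∪ {a, b} from hh ▸ hbmem) h1.2.2.2.1
        | succ s'' =>
          have h1 := hinj t'' (by omega) s'' (by omega)
          refine ⟨fun hh => ?_, fun hh => ?_, h1.2.2⟩
          · dsimp only at hh
            rw [h1.1 hh]
          · dsimp only at hh
            rw [h1.2.1 hh]
    · intro t ht s' hs'
      cases t with
      | zero =>
        cases s' with
        | zero => intro _; rfl
        | succ s'' =>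
          intro hh
          dsimp only at hh
          exact absurd (Finset.mem_union_right _ (by simp [← hh]))
            (hprops s'' (by omega)).2.2.2.2.2
      | succ t'' =>
        cases s' with
        | zero =>
          intro hh
          dsimp only at hh
          exact absurd (Finset.mem_union_right _ (by simp [hh]))
            (hprops t'' (by omega)).2.2.2.2.2
        | succ s'' =>
          intro hh
          dsimp only at hh
          have := hdinj t'' (by omega) s'' (by omega) hh
          omega
    · intro f hf
      by_cases hfa : (G f).Adj x a
      · exact ⟨0, by omega, hfa⟩
      · have hf' : f ∈ F' := by
          rw [hF'def]
          exact Finset.mem_filter.2 ⟨hf, hfa⟩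
        obtain ⟨t, ht, hadjt⟩ := hhit f hf'
        exact ⟨t + 1, by omega, hadjt⟩

end PhaseA


section PhaseB

variable {x : Fin n} {A : Abs G x} {α : ℝ}

lemma phaseB_ind (hα : 0 < α) (hα1 : α < 1)
    (hdeg : ∀ c v, (1/2 + α) * n ≤ ((nbr G c v).card : ℝ))
    (hnum : (5 * A.T' : ℝ) + 4 ≤ α * n) :
    ∀ s, 1 ≤ s → s ≤ A.T' →
    ∃ X : Conf G x A s (3*s - 1),
      X.P (3*s - 1 - 1) = A.b (s-1) ∧
      (∀ i < 3*s - 1, ∀ t, s ≤ t → t < A.T' → X.P i ≠ A.a t ∧ X.P i ≠ A.b t) ∧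
      (∀ i, i + 1 < 3*s - 1 → ∀ t, s ≤ t → t < A.T' → X.C i ≠ A.d t) := by
  classical
  intro s hs1
  induction s, hs1 using Nat.le_induction with
  | base =>
    intro h1T
    have h0T : 0 < A.T' := h1T
    refine ⟨⟨fun i => if i = 0 then A.a 0 else A.b 0, fun _ => A.d 0, ?_, ?_, ?_, ?_, ?_⟩,
      ?_, ?_, ?_⟩
    · intro i hi j hj h
      interval_cases i <;> interval_cases j <;> simp_all
      · exact absurd h ((A.vinj 0 h0T 0 h0T).2.2)
      · exact absurd h.symm ((A.vinj 0 h0T 0 h0T).2.2)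
    · intro i hi j hj h
      omega
    · intro i hi
      have hi0 : i = 0 := by omega
      subst hi0
      simpa using A.adj 0 h0T
    · intro i hi
      split_ifs
      · exact (A.anx 0 h0T).1
      · exact (A.anx 0 h0T).2
    · intro t ht
      have ht0 : t = 0 := by omega
      subst ht0
      exact ⟨0, by omega, rfl, Or.inl ⟨by simp, by simp⟩⟩
    · simp
    · intro i hi t hst htT
      dsimp only
      have ht0 : t ≠ 0 := by omega
      constructor
      · split_ifs
        · exact fun hh => ht0 ((A.vinj 0 h0T t htT).1 hh).symm
        · exact fun hh => (A.vinj t htT 0 h0T).2.2 hh.symm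
      · split_ifs
        · exact (A.vinj 0 h0T t htT).2.2
        · exact fun hh => ht0 ((A.vinj 0 h0T t htT).2.1 hh).symm
    · intro i hi t hst htT
      exact fun hh => (by omega : (0:ℕ) ≠ t) (A.cinj 0 h0T t htT hh)
  | succ s hs1 ih =>
    intro hsT
    set k := 3*s - 1 with hkdef
    obtain ⟨X0, hend, hfreshV, hfreshC⟩ := ih (by omega)
    have hsT' : s < A.T' := by omega
    have hk2 : 2 ≤ k := by omega
    have hnR : (0:ℝ) < n := by
      have : (0:ℕ) < n := x.pos
      exact_mod_cast this
    -- choose two fresh colours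
    have hTn : (A.T' : ℝ) ≤ α * n / 5 := by linarith
    have hkT : (k : ℝ) ≤ 3 * A.T' - 1 := by
      have h1 : k ≤ 3 * A.T' - 1 := by omega
      have h2 : 1 ≤ 3 * A.T' := by omega
      have := (Nat.cast_le (α := ℝ)).2 h1
      push_cast [Nat.cast_sub h2] at this
      linarith
    have hcolors : (1:ℕ) <
        ((Finset.univ \ (((Finset.range (k-1)).image X0.C) ∪
          ((Finset.range A.T').image A.d))).card) := by
      have h1 := sdiff_card_lb (Finset.univ : Finset (Fin n))
        (((Finset.range (k-1)).image X0.C) ∪ ((Finset.range A.T').image A.d))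
      have h2 : ((((Finset.range (k-1)).image X0.C) ∪
          ((Finset.range A.T').image A.d)).card : ℝ) ≤ (k-1:ℕ) + A.T' := by
        have h3 := Finset.card_union_le (((Finset.range (k-1)).image X0.C))
          (((Finset.range A.T').image A.d))
        have h4 : ((Finset.range (k-1)).image X0.C).card ≤ k-1 := by
          calc ((Finset.range (k-1)).image X0.C).card ≤ (Finset.range (k-1)).card :=
            Finset.card_image_le
          _ = k-1 := Finset.card_range _
        have h5 : ((Finset.range A.T').image A.d).card ≤ A.T' := by
          calc ((Finset.range A.T').image A.d).card ≤ (Finset.range A.T').card :=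
            Finset.card_image_le
          _ = A.T' := Finset.card_range _
        exact_mod_cast by omega
      have h6 : ((Finset.univ : Finset (Fin n)).card : ℝ) = n := by simp
      have h7 : ((k-1:ℕ):ℝ) ≤ (k:ℝ) - 1 := by
        have : (1:ℕ) ≤ k := by omega
        push_cast [Nat.cast_sub this]
        linarith
      have h8 : (α:ℝ) * n ≤ n := by nlinarith
      have : (1:ℝ) < ((Finset.univ \ (((Finset.range (k-1)).image X0.C) ∪
          ((Finset.range A.T').image A.d))).card : ℝ) := by
        have hT0 : (0:ℝ) ≤ (A.T' : ℝ) := Nat.cast_nonneg _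
        linarith
      exact_mod_cast this
    rw [Finset.one_lt_card] at hcolors
    obtain ⟨e1, he1, e2, he2, he12⟩ := hcolors
    simp only [Finset.mem_sdiff, Finset.mem_univ, true_and, Finset.mem_union,
      Finset.mem_image, Finset.mem_range, not_or, not_exists] at he1 he2
    push_neg at he1 he2
    have he1free : X0.free e1 := by
      intro i hi hh
      exact he1.1 i (by omega) hh
    have he2free : X0.free e2 := by
      intro i hi hh
      exact he2.1 i (by omega) hh
    -- choose the connecting vertex
    have hvert : (0:ℝ) <
        (((nbr G e1 (X0.P (k-1)) ∩ nbr G e2 (A.a s)) \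
          (((Finset.range k).image X0.P) ∪ ({x} ∪ (((Finset.range A.T').image A.a) ∪
            ((Finset.range A.T').image A.b))))).card) := by
      have h1 := sdiff_card_lb (nbr G e1 (X0.P (k-1)) ∩ nbr G e2 (A.a s))
        (((Finset.range k).image X0.P) ∪ ({x} ∪ (((Finset.range A.T').image A.a) ∪
            ((Finset.range A.T').image A.b))))
      have h2 := inter_card_lb (nbr G e1 (X0.P (k-1))) (nbr G e2 (A.a s))
      have hd1 := hdeg e1 (X0.P (k-1))
      have hd2 := hdeg e2 (A.a s)
      have h3 : ((((Finset.range k).image X0.P) ∪ ({x} ∪ (((Finset.range A.T').image A.a) ∪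
            ((Finset.range A.T').image A.b)))).card : ℝ) ≤ (k:ℝ) + 1 + A.T' + A.T' := by
        have c1 : ((Finset.range k).image X0.P).card ≤ k := by
          calc ((Finset.range k).image X0.P).card ≤ (Finset.range k).card :=
            Finset.card_image_le
          _ = k := Finset.card_range _
        have c2 : ((Finset.range A.T').image A.a).card ≤ A.T' := by
          calc ((Finset.range A.T').image A.a).card ≤ (Finset.range A.T').card :=
            Finset.card_image_le
          _ = A.T' := Finset.card_range _
        have c3 : ((Finset.range A.T').image A.b).card ≤ A.T' := by
          calc ((Finset.range A.T').image A.b).card ≤ (Finset.range A.T').card :=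
            Finset.card_image_le
          _ = A.T' := Finset.card_range _
        have c4 := Finset.card_union_le ({x} : Finset (Fin n))
          (((Finset.range A.T').image A.a) ∪ ((Finset.range A.T').image A.b))
        have c5 := Finset.card_union_le (((Finset.range A.T').image A.a))
          (((Finset.range A.T').image A.b))
        have c6 := Finset.card_union_le (((Finset.range k).image X0.P))
          (({x} ∪ (((Finset.range A.T').image A.a) ∪ ((Finset.range A.T').image A.b))))
        have c7 : ({x} : Finset (Fin n)).card = 1 := Finset.card_singleton x
        exact_mod_cast by omega
      linarith
    obtain ⟨u, hu⟩ := real_nonempty hvert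
    simp only [Finset.mem_sdiff, Finset.mem_inter, Finset.mem_union,
      Finset.mem_image, Finset.mem_range, Finset.mem_singleton, not_or,
      not_exists] at hu
    push_neg at hu
    obtain ⟨⟨hue1, hue2⟩, hufresh', hux, hua, hub⟩ := hu
    have hufresh : ∀ i < k, X0.P i ≠ u := fun i hi hh => hufresh' i hi hh
    have huadj1 : (G e1).Adj (X0.P (k-1)) u := (mem_nbr G).1 hue1
    have huadj2 : (G e2).Adj (A.a s) u := (mem_nbr G).1 hue2
    -- three appends
    set X1 := X0.app u e1 hk2 hux hufresh he1free huadj1 with hX1def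
    have hX1P : ∀ i < k, X1.P i = X0.P i := fun i hi =>
      X0.app_P u e1 hk2 hux hufresh he1free huadj1 i hi
    have hX1Pl : X1.P k = u :=
      X0.app_P_last u e1 hk2 hux hufresh he1free huadj1
    have hX1C : ∀ i, i + 1 < k → X1.C i = X0.C i := fun i hi =>
      X0.app_C u e1 hk2 hux hufresh he1free huadj1 i hi
    have hX1Cl : X1.C (k-1) = e1 :=
      X0.app_C_last u e1 hk2 hux hufresh he1free huadj1
    -- second append : vertex A.a s with colour e2
    have ha2x : A.a s ≠ x := (A.anx s hsT').1
    have ha2fresh : ∀ i < k+1, X1.P i ≠ A.a s := by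
      intro i hi
      rcases Nat.lt_or_ge i k with h' | h'
      · rw [hX1P i h']
        exact (hfreshV i h' s (le_refl s) hsT').1
      · have : i = k := by omega
        subst this
        rw [hX1Pl]
        exact fun hh => hua s hsT' hh.symm
    have he2free1 : X1.free e2 := by
      intro i hi
      rcases Nat.lt_or_ge (i+1) k with h' | h'
      · rw [hX1C i h']
        exact he2free i h'
      · have : i = k - 1 := by omega
        subst this
        rw [hX1Cl]
        exact fun hh => he12 hh
    have huadj2' : (G e2).Adj (X1.P ((k+1)-1)) (A.a s) := by
      have : (k+1)-1 = k := by omega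
      rw [this, hX1Pl]
      exact huadj2.symm
    set X2 := X1.app (A.a s) e2 (by omega) ha2x ha2fresh he2free1 huadj2' with hX2def
    have hX2P : ∀ i < k+1, X2.P i = X1.P i := fun i hi =>
      X1.app_P (A.a s) e2 (by omega) ha2x ha2fresh he2free1 huadj2' i hi
    have hX2Pl : X2.P (k+1) = A.a s :=
      X1.app_P_last (A.a s) e2 (by omega) ha2x ha2fresh he2free1 huadj2'
    have hX2C : ∀ i, i + 1 < k+1 → X2.C i = X1.C i := fun i hi =>
      X1.app_C (A.a s) e2 (by omega) ha2x ha2fresh he2free1 huadj2' i hi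
    have hX2Cl : X2.C k = e2 := by
      have := X1.app_C_last (A.a s) e2 (by omega) ha2x ha2fresh he2free1 huadj2'
      simpa using this
    -- third append : vertex A.b s with colour A.d s
    have hb3x : A.b s ≠ x := (A.anx s hsT').2
    have hb3fresh : ∀ i < k+2, X2.P i ≠ A.b s := by
      intro i hi
      rcases Nat.lt_or_ge i (k+1) with h' | h'
      · rw [hX2P i h']
        rcases Nat.lt_or_ge i k with h'' | h''
        · rw [hX1P i h'']
          exact (hfreshV i h'' s (le_refl s) hsT').2
        · have : i = k := by omega
          subst this
          rw [hX1Pl]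
          exact fun hh => hub s hsT' hh.symm
      · have : i = k + 1 := by omega
        subst this
        rw [hX2Pl]
        exact (A.vinj s hsT' s hsT').2.2
    have hd3free : X2.free (A.d s) := by
      intro i hi
      rcases Nat.lt_or_ge (i+1) (k+1) with h' | h'
      · rw [hX2C i h']
        rcases Nat.lt_or_ge (i+1) k with h'' | h''
        · rw [hX1C i h'']
          exact hfreshC i h'' s (le_refl s) hsT'
        · have : i = k - 1 := by omega
          subst this
          rw [hX1Cl]
          exact fun hh => he1.2 s hsT' hh.symm
      · have : i = k := by omega
        subst this
        rw [hX2Cl]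
        exact fun hh => he2.2 s hsT' hh.symm
    have hd3adj : (G (A.d s)).Adj (X2.P ((k+2)-1)) (A.b s) := by
      have : (k+2)-1 = k+1 := by omega
      rw [this, hX2Pl]
      exact A.adj s hsT'
    set X3 := X2.app (A.b s) (A.d s) (by omega) hb3x hb3fresh hd3free hd3adj with hX3def
    have hX3P : ∀ i < k+2, X3.P i = X2.P i := fun i hi =>
      X2.app_P (A.b s) (A.d s) (by omega) hb3x hb3fresh hd3free hd3adj i hi
    have hX3Pl : X3.P (k+2) = A.b s :=
      X2.app_P_last (A.b s) (A.d s) (by omega) hb3x hb3fresh hd3free hd3adj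
    have hX3C : ∀ i, i + 1 < k+2 → X3.C i = X2.C i := fun i hi =>
      X2.app_C (A.b s) (A.d s) (by omega) hb3x hb3fresh hd3free hd3adj i hi
    have hX3Cl : X3.C (k+1) = A.d s := by
      have := X2.app_C_last (A.b s) (A.d s) (by omega) hb3x hb3fresh hd3free hd3adj
      simpa using this
    -- bump the absorber count
    have hnew : ∃ i, i + 1 < k + 3 ∧ X3.C i = A.d s ∧
        ((X3.P i = A.a s ∧ X3.P (i+1) = A.b s) ∨
         (X3.P i = A.b s ∧ X3.P (i+1) = A.a s)) := by
      refine ⟨k+1, by omega, hX3Cl, Or.inl ⟨?_, hX3Pl⟩⟩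
      rw [hX3P (k+1) (by omega), hX2Pl]
    rw [show 3*(s+1) - 1 = k + 3 from by omega]
    refine ⟨X3.bump hnew, ?_, ?_, ?_⟩
    · show X3.P (k+3-1) = A.b (s+1-1)
      have e1 : k+3-1 = k+2 := by omega
      have e2 : s+1-1 = s := by omega
      rw [e1, e2]
      exact hX3Pl
    · intro i hi t hst htT
      show X3.P i ≠ A.a t ∧ X3.P i ≠ A.b t
      by_cases h1 : i < k
      · rw [hX3P i (by omega), hX2P i (by omega), hX1P i h1]
        exact ⟨(hfreshV i h1 t (by omega) htT).1, (hfreshV i h1 t (by omega) htT).2⟩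
      · by_cases h2 : i = k
        · subst h2
          rw [hX3P _ (by omega), hX2P _ (by omega), hX1Pl]
          exact ⟨fun hh => hua t htT hh.symm, fun hh => hub t htT hh.symm⟩
        · by_cases h3 : i = k+1
          · subst h3
            rw [hX3P _ (by omega), hX2Pl]
            constructor
            · intro hh
              have := (A.vinj s hsT' t htT).1 hh
              omega
            · exact (A.vinj s hsT' t htT).2.2
          · have h4 : i = k+2 := by omega
            subst h4
            rw [hX3Pl]
            constructor
            · intro hh
              exact (A.vinj t htT s hsT').2.2 hh.symm
            · intro hh
              have := (A.vinj s hsT' t htT).2.1 hh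
              omega
    · intro i hi t hst htT
      show X3.C i ≠ A.d t
      by_cases h1 : i + 1 < k
      · rw [hX3C i (by omega), hX2C i (by omega), hX1C i h1]
        exact hfreshC i h1 t (by omega) htT
      · by_cases h2 : i = k-1
        · subst h2
          rw [hX3C _ (by omega), hX2C _ (by omega), hX1Cl]
          exact fun hh => he1.2 t htT hh.symm
        · by_cases h3 : i = k
          · subst h3
            rw [hX3C _ (by omega), hX2Cl]
            exact fun hh => he2.2 t htT hh.symm
          · have h4 : i = k+1 := by omega
            subst h4
            rw [hX3Cl]
            intro hh
            have := A.cinj s hsT' t htT hh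
            omega

end PhaseB


section Final

variable {x : Fin n} {A : Abs G x}

/-- an injective map on `n-1` indices avoiding `z` covers everything else -/
lemma cover {g : ℕ → Fin n} {z : Fin n} (hn : 1 ≤ n)
    (hinj : ∀ i < n-1, ∀ j < n-1, g i = g j → i = j) (hz : ∀ i < n-1, g i ≠ z) :
    ∀ v, v ≠ z → ∃ i < n-1, g i = v := by
  classical
  have hcard : ((Finset.range (n-1)).image g).card = n - 1 := by
    rw [Finset.card_image_of_injOn, Finset.card_range]
    intro i hi j hj hh
    exact hinj i (Finset.mem_range.1 hi) j (Finset.mem_range.1 hj) hh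
  have hsub : (Finset.range (n-1)).image g ⊆ Finset.univ.erase z := by
    intro v hv
    obtain ⟨i, hi, hgi⟩ := Finset.mem_image.1 hv
    rw [Finset.mem_erase]
    exact ⟨hgi ▸ hz i (Finset.mem_range.1 hi), Finset.mem_univ v⟩
  have hcard2 : (Finset.univ.erase z).card = n - 1 := by
    rw [Finset.card_erase_of_mem (Finset.mem_univ z)]
    simp
  have heq : (Finset.range (n-1)).image g = Finset.univ.erase z :=
    Finset.eq_of_subset_of_card_le hsub (by omega)
  intro v hv
  have : v ∈ (Finset.range (n-1)).image g := by
    rw [heq, Finset.mem_erase]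
    exact ⟨hv, Finset.mem_univ v⟩
  obtain ⟨i, hi, hgi⟩ := Finset.mem_image.1 this
  exact ⟨i, Finset.mem_range.1 hi, hgi⟩

/-- the final absorption: from a rainbow cycle on all vertices but `x`, with one
free colour, build the transversal Hamilton cycle -/
lemma final (hn : 3 ≤ n) (Y : Cyc G x A A.T' (n-1)) (f : Fin n) (hf : Y.free f) :
    ∃ (σ : ℕ → Fin n) (φ : ℕ → Fin n),
      Set.BijOn σ {i | i < n} Set.univ ∧
      Set.BijOn φ {i | i < n} Set.univ ∧
      ∀ i < n, (G (φ i)).Adj (σ i) (σ ((i + 1) % n)) := by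
  classical
  have hk2 : 2 ≤ n - 1 := by omega
  obtain ⟨t, htT, hadj⟩ := A.hit f
  obtain ⟨m, hm, hDm, hor⟩ := Y.habs t htT
  set r0 := (m+1) % (n-1) with hr0def
  have hr0k : r0 < (n-1) := Nat.mod_lt _ (by omega)
  have e_junc : (r0 + ((n-1)-1)) % (n-1) = m := by
    rw [hr0def]
    rw [Nat.mod_add_mod]
    have : m + 1 + ((n-1)-1) = m + (n-1) := by omega
    rw [this, Nat.add_mod_right, Nat.mod_eq_of_lt hm]
  have hfd : f ≠ A.d t := by
    intro hh
    exact hf m hm (hDm.trans hh.symm)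
  -- choose the two junction colours depending on orientation
  obtain ⟨cA, cB, h1, h2, hchar⟩ :
      ∃ cA cB, (G cA).Adj (Y.Q m) x ∧ (G cB).Adj x (Y.Q r0) ∧
        ((cA = f ∧ cB = A.d t) ∨ (cA = A.d t ∧ cB = f)) := by
    rcases hor with ⟨hqa, hqb⟩ | ⟨hqb, hqa⟩
    · refine ⟨f, A.d t, ?_, ?_, Or.inl ⟨rfl, rfl⟩⟩
      · rw [hqa]; exact hadj.symm
      · rw [hr0def, hqb]; exact A.bx t htT
    · refine ⟨A.d t, f, ?_, ?_, Or.inr ⟨rfl, rfl⟩⟩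
      · rw [hqb]; exact (A.bx t htT).symm
      · rw [hr0def, hqa]; exact hadj
  have hcAB : cA ≠ cB := by
    rcases hchar with ⟨hA1, hB1⟩ | ⟨hA1, hB1⟩
    · rw [hA1, hB1]; exact hfd
    · rw [hA1, hB1]; exact Ne.symm hfd
  -- inner positions avoid `m`
  have hinner_ne_m : ∀ i < (n-1)-1, (r0 + i) % (n-1) ≠ m := by
    intro i hi hh
    rw [← e_junc] at hh
    have := modwin (k := (n-1)) (r := r0) (a := i) (b := (n-1)-1) (by omega) (by omega) hh
    omega
  -- define the Hamilton cycle
  set σ : ℕ → Fin n := fun i => if i < (n-1) then Y.Q ((r0 + i) % (n-1)) else x with hσdef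
  set φ : ℕ → Fin n := fun i => if i < (n-1)-1 then Y.D ((r0 + i) % (n-1))
    else if i = (n-1)-1 then cA else cB with hφdef
  have hσinner : ∀ i < (n-1), σ i = Y.Q ((r0 + i) % (n-1)) := by
    intro i hi
    simp only [hσdef, if_pos hi]
  have hσlast : σ (n-1) = x := by
    simp only [hσdef, if_neg (by omega : ¬ (n-1 < (n-1)))]
  have hφinner : ∀ i < (n-1)-1, φ i = Y.D ((r0 + i) % (n-1)) := by
    intro i hi
    simp only [hφdef, if_pos hi]
  have hφA : φ ((n-1)-1) = cA := by
    simp only [hφdef]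
    rw [if_neg (by omega : ¬ ((n-1)-1 < (n-1)-1))]
    simp
  have hφB : φ (n-1) = cB := by
    simp only [hφdef, if_neg (by omega : ¬ (n-1 < (n-1)-1)),
      if_neg (by omega : ¬ (n-1 = (n-1)-1))]
  refine ⟨σ, φ, ?_, ?_, ?_⟩
  · -- bijectivity of σ
    refine ⟨fun i _ => Set.mem_univ _, ?_, ?_⟩
    · intro i hi j hj hh
      simp only [Set.mem_setOf_eq] at hi hj
      by_cases h1i : i < (n-1) <;> by_cases h1j : j < (n-1)
      · rw [hσinner i h1i, hσinner j h1j] at hh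
        have := Y.injQ _ (Nat.mod_lt _ (by omega)) _ (Nat.mod_lt _ (by omega)) hh
        exact modwin (by omega) (by omega) this
      · rw [hσinner i h1i] at hh
        have : σ j = x := by simp only [hσdef, if_neg h1j]
        rw [this] at hh
        exact absurd hh (Y.nx _ (Nat.mod_lt _ (by omega)))
      · rw [hσinner j h1j] at hh
        have : σ i = x := by simp only [hσdef, if_neg h1i]
        rw [this] at hh
        exact absurd hh.symm (Y.nx _ (Nat.mod_lt _ (by omega)))
      · omega
    · intro v _
      by_cases hv : v = x
      · exact ⟨n-1, by simp only [Set.mem_setOf_eq]; omega, by rw [hσlast, hv]⟩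
      · obtain ⟨r, hr, hqr⟩ := cover (by omega) Y.injQ Y.nx v hv
        refine ⟨(r + (n-1) - r0) % (n-1), ?_, ?_⟩
        · simp only [Set.mem_setOf_eq]
          have := Nat.mod_lt (r + (n-1) - r0) (show 0 < (n-1) by omega)
          omega
        · rw [hσinner _ (Nat.mod_lt _ (by omega)), mod_roundtrip hr0k hr]
          exact hqr
  · -- bijectivity of φ
    refine ⟨fun i _ => Set.mem_univ _, ?_, ?_⟩
    · intro i hi j hj hh
      simp only [Set.mem_setOf_eq] at hi hj
      have hDneA : ∀ p, p < (n-1)-1 → Y.D ((r0 + p) % (n-1)) ≠ cA := by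
        intro p hp hheq
        rcases hchar with ⟨hA1, _⟩ | ⟨hA1, _⟩
        · exact hf _ (Nat.mod_lt _ (by omega)) (hheq.trans hA1)
        · rw [hA1, ← hDm] at hheq
          have := Y.injD _ (Nat.mod_lt _ (by omega)) m hm hheq
          exact hinner_ne_m p hp this
      have hDneB : ∀ p, p < (n-1)-1 → Y.D ((r0 + p) % (n-1)) ≠ cB := by
        intro p hp hheq
        rcases hchar with ⟨_, hB1⟩ | ⟨_, hB1⟩
        · rw [hB1, ← hDm] at hheq
          have := Y.injD _ (Nat.mod_lt _ (by omega)) m hm hheq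
          exact hinner_ne_m p hp this
        · exact hf _ (Nat.mod_lt _ (by omega)) (hheq.trans hB1)
      by_cases h1i : i < (n-1)-1 <;> by_cases h1j : j < (n-1)-1
      · rw [hφinner i h1i, hφinner j h1j] at hh
        have := Y.injD _ (Nat.mod_lt _ (by omega)) _ (Nat.mod_lt _ (by omega)) hh
        exact modwin (by omega) (by omega) this
      · by_cases h2j : j = (n-1)-1
        · subst h2j
          rw [hφinner i h1i, hφA] at hh
          exact absurd hh (hDneA i h1i)
        · have hjn : j = n-1 := by omega
          subst hjn
          rw [hφinner i h1i, hφB] at hh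
          exact absurd hh (hDneB i h1i)
      · by_cases h2i : i = (n-1)-1
        · subst h2i
          rw [hφinner j h1j, hφA] at hh
          exact absurd hh.symm (hDneA j h1j)
        · have hin : i = n-1 := by omega
          subst hin
          rw [hφinner j h1j, hφB] at hh
          exact absurd hh.symm (hDneB j h1j)
      · by_cases h2i : i = (n-1)-1 <;> by_cases h2j : j = (n-1)-1
        · omega
        · subst h2i
          have hjn : j = n-1 := by omega
          subst hjn
          rw [hφA, hφB] at hh
          exact absurd hh hcAB
        · subst h2j
          have hin : i = n-1 := by omega
          subst hin
          rw [hφA, hφB] at hh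
          exact absurd hh.symm hcAB
        · omega
    · intro c _
      have hcover := cover (g := Y.D) (z := f) (by omega) Y.injD
        (fun i hi hh => hf i hi hh)
      by_cases hcf : c = f
      · subst hcf
        rcases hchar with ⟨hA1, _⟩ | ⟨_, hB1⟩
        · exact ⟨(n-1)-1, by simp only [Set.mem_setOf_eq]; omega, by rw [hφA, hA1]⟩
        · exact ⟨n-1, by simp only [Set.mem_setOf_eq]; omega, by rw [hφB, hB1]⟩
      · obtain ⟨p, hp, hdp⟩ := hcover c hcf
        by_cases hpm : p = m
        · subst hpm
          rcases hchar with ⟨_, hB1⟩ | ⟨hA1, _⟩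
          · refine ⟨n-1, by simp only [Set.mem_setOf_eq]; omega, ?_⟩
            rw [hφB, hB1, ← hDm, hdp]
          · refine ⟨(n-1)-1, by simp only [Set.mem_setOf_eq]; omega, ?_⟩
            rw [hφA, hA1, ← hDm, hdp]
        · set i := (p + (n-1) - r0) % (n-1) with hidef
          have hik : i < (n-1) := Nat.mod_lt _ (by omega)
          have hrt : (r0 + i) % (n-1) = p := mod_roundtrip hr0k hp
          have hikk : i < (n-1) - 1 := by
            rcases Nat.lt_or_ge i ((n-1)-1) with h' | h'
            · exact h'
            · exfalso
              have : i = (n-1)-1 := by omega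
              rw [this] at hrt
              rw [e_junc] at hrt
              exact hpm hrt.symm
          refine ⟨i, by simp only [Set.mem_setOf_eq]; omega, ?_⟩
          rw [hφinner i hikk, hrt, hdp]
  · -- adjacency
    intro i hi
    by_cases h1i : i < (n-1)-1
    · have e1 : (i+1) % n = i + 1 := Nat.mod_eq_of_lt (by omega)
      rw [e1, hφinner i h1i, hσinner i (by omega), hσinner (i+1) (by omega)]
      have e2 : (r0 + (i+1)) % (n-1) = ((r0 + i) % (n-1) + 1) % (n-1) := by
        rw [← Nat.add_assoc]
        exact (mod_succ_eq _ _).symm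
      rw [e2]
      exact Y.adj _ (Nat.mod_lt _ (by omega))
    · by_cases h2i : i = (n-1)-1
      · subst h2i
        have e1 : ((n-1)-1+1) % n = (n-1) := by
          have : (n-1) - 1 + 1 = (n-1) := by omega
          rw [this, Nat.mod_eq_of_lt (by omega)]
        rw [e1, hφA, hσinner ((n-1)-1) (by omega)]
        have e2 : σ (n-1) = x := by
          simp only [hσdef, if_neg (by omega : ¬ ((n-1) < (n-1)))]
        rw [e2, e_junc]
        exact h1
      · have hin : i = n-1 := by omega
        subst hin
        have e1 : (n-1+1) % n = 0 := by
          have : n - 1 + 1 = n := by omega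
          rw [this, Nat.mod_self]
        rw [e1, hφB, hσlast, hσinner 0 (by omega)]
        have e2 : (r0 + 0) % (n-1) = r0 := by
          rw [Nat.add_zero, Nat.mod_eq_of_lt hr0k]
        rw [e2]
        exact h2


/-- the final closing of a spanning path into a spanning cycle -/
lemma closeFinal {α : ℝ} (hα : 0 < α)
    (hdeg : ∀ c v, (1/2 + α) * n ≤ ((nbr G c v).card : ℝ))
    (hsT : ((A.T' : ℝ)) + 2 ≤ 2*α*n) (hn : 3 ≤ n)
    (X : Conf G x A A.T' (n-1)) :
    ∃ (Y : Cyc G x A A.T' (n-1)) (f : Fin n), Y.free f := by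
  classical
  set k := n - 1 with hkdef
  have hk2 : 2 ≤ k := by omega
  -- saturation is automatic for a spanning path
  have hsat : ∀ (v : Fin n) (u : Fin n), u = x ∨ ∃ s' < k, X.P s' = u := by
    intro v u
    by_cases hux : u = x
    · exact Or.inl hux
    · exact Or.inr (cover (by omega) X.injP X.nx u hux)
  -- two free colours
  have hfree2 : (1 : ℕ) < (Finset.univ.filter (fun c => X.free c)).card := by
    have h1 := X.free_card (by omega)
    have hh : ((k-1:ℕ):ℝ) ≤ (n:ℝ) - 2 := by
      have h2 : (k - 1 : ℕ) + 2 ≤ n := by omega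
      have := (Nat.cast_le (α := ℝ)).2 h2
      push_cast at this
      linarith
    have : (1:ℝ) < ((Finset.univ.filter (fun c => X.free c)).card : ℝ) := by linarith
    exact_mod_cast this
  rw [Finset.one_lt_card] at hfree2
  obtain ⟨j₁, hj₁, j₂, hj₂, hj12⟩ := hfree2
  simp only [Finset.mem_filter, Finset.mem_univ, true_and] at hj₁ hj₂
  set Aset := (Finset.range (k-1)).filter (fun i => (G j₁).Adj (X.P 0) (X.P (i+1)))
    with hAdef
  set Bset := (Finset.range (k-1)).filter (fun i => (G j₂).Adj (X.P (k-1)) (X.P i))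
    with hBdef
  set Abspos := (Finset.range (k-1)).filter (fun i => ∃ t < A.T', X.C i = A.d t)
    with hAbsdef
  have hcA : ((nbr G j₁ (X.P 0)).card : ℝ) - 1 ≤ (Aset.card : ℝ) :=
    X.cardA j₁ (by omega) (fun u _ => hsat (X.P 0) u)
  have hcB : ((nbr G j₂ (X.P (k-1))).card : ℝ) - 1 ≤ (Bset.card : ℝ) :=
    X.cardB j₂ (by omega) (fun u _ => hsat (X.P (k-1)) u)
  have hinter : (Aset.card : ℝ) + Bset.card - (k-1:ℕ) ≤ ((Aset ∩ Bset).card : ℝ) := by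
    have := inter_card_lb' (Aset := Aset) (Bset := Bset) (big := Finset.range (k-1))
      (by rw [hAdef]; exact Finset.filter_subset _ _)
      (by rw [hBdef]; exact Finset.filter_subset _ _)
    simpa using this
  have habscard : ((Abspos.card : ℝ)) ≤ A.T' := by
    exact_mod_cast X.absPos_card
  have hd1 := hdeg j₁ (X.P 0)
  have hd2 := hdeg j₂ (X.P (k-1))
  have hkr : ((k-1:ℕ):ℝ) ≤ (n:ℝ) - 2 := by
    have h2 : (k - 1 : ℕ) + 2 ≤ n := by omega
    have := (Nat.cast_le (α := ℝ)).2 h2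
    push_cast at this
    linarith
  have hpos : (0:ℝ) < (((Aset ∩ Bset) \ Abspos).card : ℝ) := by
    have := sdiff_card_lb (Aset ∩ Bset) Abspos
    have hnα : 0 < (n:ℝ) := by
      have : (0:ℕ) < n := by omega
      exact_mod_cast this
    nlinarith
  obtain ⟨i₀, hi₀⟩ := real_nonempty hpos
  simp only [Finset.mem_sdiff, Finset.mem_inter, hAdef, hBdef, hAbsdef,
    Finset.mem_filter, Finset.mem_range] at hi₀
  obtain ⟨⟨⟨hi₀k, hadjA⟩, ⟨_, hadjB⟩⟩, hnabs⟩ := hi₀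
  have habs₀ : ∀ t < A.T', X.C i₀ ≠ A.d t := by
    intro t ht hh
    exact hnabs ⟨by omega, t, ht, hh⟩
  exact ⟨X.close i₀ j₁ j₂ (by omega) hj₁ hj₂ hj12 hadjA hadjB habs₀, X.C i₀,
    X.close_free_removed i₀ j₁ j₂ (by omega) hj₁ hj₂ hj12 hadjA hadjB habs₀⟩

/-- iterate the growing step -/
lemma growAll {α : ℝ} (hα : 0 < α)
    (hdeg : ∀ c v, (1/2 + α) * n ≤ ((nbr G c v).card : ℝ))
    (hsT : ((A.T' : ℝ)) + 2 ≤ 2*α*n) {k₀ : ℕ} (hk₀2 : 2 ≤ k₀)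
    (base : Nonempty (Conf G x A A.T' k₀)) :
    ∀ k, k₀ ≤ k → k ≤ n-1 → Nonempty (Conf G x A A.T' k) := by
  intro k hk
  induction k, hk using Nat.le_induction with
  | base => intro _; exact base
  | succ k hk ih =>
    intro hk1
    obtain ⟨X⟩ := ih (by omega)
    exact grow hα hdeg hsT (by omega) (by omega) X

end Final


set_option maxHeartbeats 1000000 in
lemma expo {β : ℝ} {n : ℕ} (hβ : 0 < β) (hβ4 : β ≤ 1/4)
    (hn2 : (10:ℝ)^6 ≤ β^4 * n) :
    (1-β)^(Nat.floor (β * n / 8)) * n < 1 := by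
  set m := Nat.floor (β * n / 8) with hmdef
  have hnR : (0:ℝ) < n := by nlinarith [pow_pos hβ 4]
  have hm1 : (m:ℝ) ≤ β * n / 8 := Nat.floor_le (by positivity)
  have hm2 : β * n / 8 < (m:ℝ) + 1 := Nat.lt_floor_add_one _
  clear_value m
  set mh := m / 2 with hmhdef
  have hmh1 : 2 * mh ≤ m := by omega
  have hmh2 : m ≤ 2 * mh + 1 := by omega
  clear_value mh
  have hmh3 : (m:ℝ) / 2 - 1 ≤ (mh:ℝ) := by
    have h := (Nat.cast_le (α := ℝ)).2 hmh2
    push_cast at h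
    linarith
  have hb1 : 1 + (mh:ℝ) * β ≤ (1+β)^mh := by
    have := one_add_mul_le_pow (a := β) (by linarith) mh
    linarith
  have hβ2 : β^2 ≤ 1/16 := by nlinarith
  have hz : (16:ℝ)*10^6 ≤ β^2 * n := by
    have e1 : β^4 * n = (β^2 * n) * β^2 := by ring
    rw [e1] at hn2
    nlinarith [mul_nonneg (mul_nonneg (le_of_lt hβ) (le_of_lt hβ)) (le_of_lt hnR)]
  have h1 : β * n / 16 - 2 ≤ (mh:ℝ) := by linarith
  have hy : β^2 * n / 16 - 2*β ≤ (mh:ℝ) * β := by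
    nlinarith [mul_le_mul_of_nonneg_right h1 (le_of_lt hβ)]
  have h8 : β^2 * n / 32 ≤ (mh:ℝ) * β := by linarith
  have h9 : (β^2 * n / 32)^2 ≤ ((mh:ℝ)*β)^2 := by
    apply pow_le_pow_left₀ (by nlinarith) h8
  have h10 : (n:ℝ) < (β^2 * n / 32)^2 := by
    have e2 : (β^2 * n / 32)^2 = (β^4 * n) * n / 1024 := by ring
    rw [e2]
    nlinarith [mul_le_mul_of_nonneg_right hn2 (le_of_lt hnR)]
  have hkey : (n:ℝ) < (1+β)^m := by
    have h2 : (0:ℝ) ≤ (mh:ℝ) * β := by positivity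
    have h3 : ((mh:ℝ) * β)^2 ≤ (1 + (mh:ℝ)*β)^2 := by nlinarith
    have h4 : (1 + (mh:ℝ)*β)^2 ≤ ((1+β)^mh)^2 :=
      pow_le_pow_left₀ (by positivity) hb1 2
    have h5 : ((1+β)^mh)^2 = (1+β)^(2*mh) := by
      rw [← pow_mul, Nat.mul_comm]
    have h6 : (1+β)^(2*mh) ≤ (1+β)^m := by
      apply pow_le_pow_right₀ (by linarith) hmh1
    linarith
  have hpow_pos : (0:ℝ) < (1-β)^m := pow_pos (by linarith) m
  have hlt : (1-β)^m * n < (1-β)^m * (1+β)^m :=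
    mul_lt_mul_of_pos_left hkey hpow_pos
  have heq : (1-β)^m * (1+β)^m = (1-β^2)^m := by
    rw [← mul_pow]
    congr 1
    ring
  have hle : (1-β^2)^m ≤ 1 :=
    pow_le_one₀ (by linarith [hβ2]) (by linarith [sq_nonneg β])
  calc (1-β)^m * n < (1-β)^m * (1+β)^m := hlt
  _ = (1-β^2)^m := heq
  _ ≤ 1 := hle

end TH

set_option maxHeartbeats 1000000 in
/-- Proposition 3.9 (prop:sketcheasy, Cheng–Wang–Zhao / Joos–Kim): any collection of `n`
graphs on `[n]`, each with minimum degree at least `(1/2 + α)n`, contains a transversal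
copy of a Hamilton cycle. -/
theorem stmt_14 (α : ℝ) (hα : 0 < α) :
    ∃ n₀ : ℕ, ∀ n : ℕ, n₀ ≤ n →
      ∀ G : Fin n → SimpleGraph (Fin n),
        (∀ j : Fin n, ∀ v : Fin n,
          (1 / 2 + α) * n ≤ ((Finset.univ.filter (fun u => (G j).Adj v u)).card : ℝ)) →
        ∃ (σ : ℕ → Fin n) (φ : ℕ → Fin n),
          Set.BijOn σ {i | i < n} Set.univ ∧
          Set.BijOn φ {i | i < n} Set.univ ∧
          ∀ i < n, (G (φ i)).Adj (σ i) (σ ((i + 1) % n)) := by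
  classical
  set β := min α (1/4) with hβdef
  have hβ0 : 0 < β := lt_min hα (by norm_num)
  have hβ4 : β ≤ 1/4 := min_le_right _ _
  have hβ1 : β < 1 := by linarith
  refine ⟨Nat.ceil ((10:ℝ)^6 / β^4) + 3, ?_⟩
  intro n hn G hdeg
  have hn3 : 3 ≤ n := by omega
  have hnR : (0:ℝ) < n := by
    have : (0:ℕ) < n := by omega
    exact_mod_cast this
  have hn2 : (10:ℝ)^6 ≤ β^4 * n := by
    have h1 : ((Nat.ceil ((10:ℝ)^6 / β^4) : ℕ) : ℝ) ≤ n := by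
      have : Nat.ceil ((10:ℝ)^6 / β^4) ≤ n := by omega
      exact_mod_cast this
    have h2 : (10:ℝ)^6 / β^4 ≤ (Nat.ceil ((10:ℝ)^6 / β^4) : ℝ) := Nat.le_ceil _
    have h3 : (10:ℝ)^6 / β^4 ≤ n := le_trans h2 h1
    rw [div_le_iff₀ (by positivity)] at h3
    linarith
  have hβn : (10:ℝ)^4 ≤ β * n := by
    have e : β^4 * n = (β * n) * β^3 := by ring
    have hβ3 : β^3 ≤ 1 := pow_le_one₀ hβ0.le (by linarith)
    nlinarith [mul_nonneg hβ0.le (le_of_lt hnR)]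
  have hdegβ : ∀ c v, (1/2 + β) * n ≤ ((TH.nbr G c v).card : ℝ) := by
    intro c v
    have hβα : β ≤ α := min_le_left _ _
    calc (1/2 + β) * n ≤ (1/2 + α) * n := by nlinarith
    _ ≤ _ := hdeg c v
  set x : Fin n := ⟨0, by omega⟩ with hxdef
  set m := Nat.floor (β * n / 8) with hmdef
  have hm1 : (m:ℝ) ≤ β*n/8 := Nat.floor_le (by positivity)
  have hexpo : (1-β)^m * n < 1 := TH.expo hβ0 hβ4 hn2
  obtain ⟨T', af, bf, df, hT'm, hprops, hvinj, hcinj, hhit⟩ :=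
    TH.phaseA_ind (G := G) hβ0 hβ1 hdegβ x m Finset.univ {x} ∅
      (Finset.mem_singleton_self x)
      (by rw [Finset.card_univ, Fintype.card_fin]; exact hexpo)
      (by
        rw [Finset.card_singleton]
        push_cast
        linarith)
      (by
        rw [Finset.card_empty]
        push_cast
        linarith)
  have hT'1 : 1 ≤ T' := by
    obtain ⟨t, ht, _⟩ := hhit x (Finset.mem_univ x)
    omega
  have hTn : (T' : ℝ) ≤ β*n/8 := by
    have : (T' : ℝ) ≤ m := by exact_mod_cast hT'm
    linarith
  set A : TH.Abs G x := ⟨T', af, bf, df,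
    fun t ht => (hprops t ht).1,
    fun t ht => (hprops t ht).2.1,
    fun t ht => (hprops t ht).2.2.1,
    fun t ht => ⟨fun hh => (hprops t ht).2.2.2.1 (by rw [hh]; exact Finset.mem_singleton_self x),
      fun hh => (hprops t ht).2.2.2.2.1 (by rw [hh]; exact Finset.mem_singleton_self x)⟩,
    hvinj, hcinj, fun f => hhit f (Finset.mem_univ f)⟩ with hAdef
  have hAT' : A.T' = T' := rfl
  have hnumB : (5 * A.T' : ℝ) + 4 ≤ β * n := by
    rw [hAT']
    push_cast
    linarith
  obtain ⟨X₀, -, -, -⟩ := TH.phaseB_ind hβ0 hβ1 hdegβ hnumB A.T' (by rw [hAT']; exact hT'1)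
    (le_refl A.T')
  have hsT : ((A.T' : ℝ)) + 2 ≤ 2*β*n := by
    rw [hAT']
    linarith
  have hk₀n : 3*A.T' - 1 ≤ n - 1 := by
    have h1 : (3*T' : ℝ) < n := by nlinarith
    have h2 : 3*T' < n := by exact_mod_cast h1
    rw [hAT']
    omega
  obtain ⟨X⟩ := TH.growAll hβ0 hdegβ hsT (by rw [hAT']; omega) ⟨X₀⟩ (n-1) hk₀n (le_refl _)
  obtain ⟨Y, f, hf⟩ := TH.closeFinal hβ0 hdegβ hsT hn3 X
  exact TH.final hn3 Y f hf
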